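/- arXiv:1205.1810 — 2 statements merged into one kernel-verified Lean document; each statement's English description precedes it below -/
import Mathlib

section
/- Let A be a Shin–Zettl matrix of order m on a finite interval [a,b] with A = A⁺, and let Γ₁, Γ₂ : Dom(L_max) → ℂ^m be the boundary maps defined below (even case m = 2n with n ≥ 2, or odd case m = 2n+1 with n ≥ 1 and coefficients α, β, γ, δ with αδ − βγ ≠ 0). Then the joint map y ↦ (Γ₁y, Γ₂y) from Dom(L_max) to ℂ^m × ℂ^m is surjective: for any f₁, f₂ ∈ ℂ^m there exists y ∈ Dom(L_max) with Γ₁y = f₁ and Γ₂y = f₂. -/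
open MeasureTheory Set Matrix Filter
open scoped ComplexInnerProductSpace

noncomputable section

/-- Lebesgue measure restricted to the interval `[a,b]`. -/
def muab (a b : ℝ) : MeasureTheory.Measure ℝ := MeasureTheory.volume.restrict (Set.Icc a b)

/-- `A` is a Shin–Zettl matrix of order `m` on `[a,b]`. -/
structure IsShinZettl (a b : ℝ) {m : ℕ} (A : ℝ → Matrix (Fin m) (Fin m) ℂ) : Prop where
  eq_zero_of_gt : ∀ (k s : Fin m), (k : ℕ) + 1 < (s : ℕ) → ∀ t : ℝ, A t k s = 0
  integrable : ∀ (k s : Fin m), MeasureTheory.IntegrableOn (fun t => A t k s) (Set.Icc a b)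
  superdiag_ne_zero : ∀ (k s : Fin m), (s : ℕ) = (k : ℕ) + 1 →
    ∀ᵐ t ∂(muab a b), A t k s ≠ 0

/-- `HasQD a b A y w f` : for `k < m` the function `w k` is the `k`-th quasi-derivative of
`y = w 0` relative to the Shin–Zettl matrix `A`, each being absolutely continuous on `[a,b]`
(an indefinite integral of an `L¹` function), and `f` is the `m`-th quasi-derivative `D^[m]y`. -/
def HasQD (a b : ℝ) {m : ℕ} (A : ℝ → Matrix (Fin m) (Fin m) ℂ)
    (y : ℝ → ℂ) (w : Fin m → ℝ → ℂ) (f : ℝ → ℂ) : Prop :=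
  (∀ j : Fin m, (j : ℕ) = 0 → w j = y) ∧
  MeasureTheory.IntegrableOn f (Set.Icc a b) ∧
  ∀ j : Fin m,
    MeasureTheory.IntegrableOn
      (fun s => (∑ k, A s j k * w k s) + (if (j : ℕ) + 1 = m then f s else 0)) (Set.Icc a b) ∧
    ∀ t ∈ Set.Icc a b,
      w j t = w j a +
        ∫ s in a..t, ((∑ k, A s j k * w k s) + (if (j : ℕ) + 1 = m then f s else 0))

/-- The Hilbert space `L²([a,b],ℂ)`. -/
abbrev L2C (a b : ℝ) := MeasureTheory.Lp ℂ 2 (muab a b)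

/-- The graph of the maximal quasi-differential operator `L_max` in `L²([a,b],ℂ)`. -/
def maxGraph (a b : ℝ) {m : ℕ} (A : ℝ → Matrix (Fin m) (Fin m) ℂ) :
    Set (L2C a b × L2C a b) :=
  {p | ∃ y w f, HasQD a b A y w f ∧ MeasureTheory.MemLp f 2 (muab a b) ∧
    (⇑p.1 =ᵐ[muab a b] y) ∧ (⇑p.2 =ᵐ[muab a b] fun t => Complex.I ^ m * f t)}

/-- The graph of the minimal quasi-differential operator `L_min` in `L²([a,b],ℂ)`. -/
def minGraph (a b : ℝ) {m : ℕ} (A : ℝ → Matrix (Fin m) (Fin m) ℂ) :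
    Set (L2C a b × L2C a b) :=
  {p | ∃ y w f, HasQD a b A y w f ∧ MeasureTheory.MemLp f 2 (muab a b) ∧
    (⇑p.1 =ᵐ[muab a b] y) ∧ (⇑p.2 =ᵐ[muab a b] fun t => Complex.I ^ m * f t) ∧
    ∀ j : Fin m, w j a = 0 ∧ w j b = 0}

/-- The matrix `Λ_m`: `(Λ_m)_{j,k} = (−1)^j` if `j + k = m + 1` (1-based indexing),
`0` otherwise. -/
def LambdaM (m : ℕ) : Matrix (Fin m) (Fin m) ℂ :=
  Matrix.of fun j k => if (j : ℕ) + (k : ℕ) = m - 1 then (-1 : ℂ) ^ ((j : ℕ) + 1) else 0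

/-- The formally adjoint (Lagrange adjoint) matrix `A⁺ = −Λ_m⁻¹ conj(Aᵀ) Λ_m`. -/
def formalAdjoint {m : ℕ} (A : ℝ → Matrix (Fin m) (Fin m) ℂ) :
    ℝ → Matrix (Fin m) (Fin m) ℂ :=
  fun t => -((LambdaM m)⁻¹ * (A t)ᴴ * LambdaM m)

/-- The graph of the Hilbert-space adjoint of the operator whose graph is `S`:
`(g, h)` belongs to it iff `⟪T y, g⟫ = ⟪y, h⟫` for every `(y, T y) ∈ S`. -/
def adjointRel {a b : ℝ} (S : Set (L2C a b × L2C a b)) : Set (L2C a b × L2C a b) :=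
  {q | ∀ p ∈ S, ⟪p.2, q.1⟫ = ⟪p.1, q.2⟫}


/-- The boundary map `Γ₁` for even order `m = 2n`:
`Γ₁y = i^{2n} (−D^[2n−1]y(a), …, (−1)^n D^[n]y(a), D^[2n−1]y(b), …, (−1)^{n−1} D^[n]y(b))`.
The index `j < n` corresponds to `k = j+1 ∈ {1,…,n}` and the value is
`i^{2n}(−1)^k D^[2n−k]y(a)`; for `n ≤ j < 2n` (`k = j−n+1`) it is
`i^{2n}(−1)^{k−1} D^[2n−k]y(b)`.  Here `w k = D^[k]y`. -/
def Gamma1E (a b : ℝ) {n : ℕ} (w : Fin (2 * n) → ℝ → ℂ) : Fin (2 * n) → ℂ := fun j =>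
  if (j : ℕ) < n then
    Complex.I ^ (2 * n) * (-1 : ℂ) ^ ((j : ℕ) + 1) *
      w ⟨2 * n - 1 - (j : ℕ), by have := j.isLt; omega⟩ a
  else
    Complex.I ^ (2 * n) * (-1 : ℂ) ^ ((j : ℕ) - n) *
      w ⟨2 * n - 1 - ((j : ℕ) - n), by have := j.isLt; omega⟩ b

/-- The boundary map `Γ₂` for even order `m = 2n`:
`Γ₂y = (D^[0]y(a), …, D^[n−1]y(a), D^[0]y(b), …, D^[n−1]y(b))`.  Here `w k = D^[k]y`. -/
def Gamma2E (a b : ℝ) {n : ℕ} (w : Fin (2 * n) → ℝ → ℂ) : Fin (2 * n) → ℂ := fun j =>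
  if (j : ℕ) < n then w j a
  else w ⟨(j : ℕ) - n, by have := j.isLt; omega⟩ b
/-- The boundary map `Γ₁` for odd order `m = 2n+1` with coefficients `α, β`:
for `j < n` (`k = j+1 ∈ {1,…,n}`) the value is `i^{2n+1}(−1)^k D^[2n+1−k]y(a)`; for
`n ≤ j < 2n` (`k = j−n+1`) it is `i^{2n+1}(−1)^{k−1} D^[2n+1−k]y(b)`; the last component
is `i^{2n+1}(α D^[n]y(b) + β D^[n]y(a))`.  Here `w k = D^[k]y`. -/
def Gamma1O (a b : ℝ) {n : ℕ} (αc βc : ℂ) (w : Fin (2 * n + 1) → ℝ → ℂ) :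
    Fin (2 * n + 1) → ℂ := fun j =>
  if (j : ℕ) < n then
    Complex.I ^ (2 * n + 1) * (-1 : ℂ) ^ ((j : ℕ) + 1) *
      w ⟨2 * n - (j : ℕ), by omega⟩ a
  else if (j : ℕ) < 2 * n then
    Complex.I ^ (2 * n + 1) * (-1 : ℂ) ^ ((j : ℕ) - n) *
      w ⟨2 * n - ((j : ℕ) - n), by omega⟩ b
  else
    Complex.I ^ (2 * n + 1) * (αc * w ⟨n, by omega⟩ b + βc * w ⟨n, by omega⟩ a)

/-- The boundary map `Γ₂` for odd order `m = 2n+1` with coefficients `γ, δ`: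
for `j < n` (`k = j+1`) the value is `D^[k−1]y(a)`; for `n ≤ j < 2n` (`k = j−n+1`) it is
`D^[k−1]y(b)`; the last component is `γ D^[n]y(b) + δ D^[n]y(a)`.  Here `w k = D^[k]y`. -/
def Gamma2O (a b : ℝ) {n : ℕ} (γc δc : ℂ) (w : Fin (2 * n + 1) → ℝ → ℂ) :
    Fin (2 * n + 1) → ℂ := fun j =>
  if (j : ℕ) < n then w j a
  else if (j : ℕ) < 2 * n then w ⟨(j : ℕ) - n, by omega⟩ b
  else γc * w ⟨n, by omega⟩ b + δc * w ⟨n, by omega⟩ a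

namespace QDProof
open scoped NNReal


variable {m : ℕ}

/-- total mass of the matrix at time `s`. -/
def GG (M : ℝ → Matrix (Fin m) (Fin m) ℂ) (s : ℝ) : ℝ := ∑ p : Fin m × Fin m, ‖M s p.1 p.2‖

lemma GG_nonneg (M : ℝ → Matrix (Fin m) (Fin m) ℂ) (s : ℝ) : 0 ≤ GG M s :=
  Finset.sum_nonneg fun _ _ => norm_nonneg _

lemma GG_integrable {x y : ℝ} {M : ℝ → Matrix (Fin m) (Fin m) ℂ}
    (hM : ∀ j k, IntegrableOn (fun t => M t j k) (Icc x y)) :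
    IntegrableOn (GG M) (Icc x y) :=
  integrable_finset_sum _ fun p _ => (hM p.1 p.2).norm

lemma row_le_GG (M : ℝ → Matrix (Fin m) (Fin m) ℂ) (s : ℝ) (j : Fin m) :
    (∑ k, ‖M s j k‖) ≤ GG M s := by
  rw [GG, Fintype.sum_prod_type]
  exact Finset.single_le_sum (f := fun j' => ∑ k, ‖M s j' k‖)
    (fun i _ => Finset.sum_nonneg fun _ _ => norm_nonneg _) (Finset.mem_univ j)

lemma mv_bound (M : ℝ → Matrix (Fin m) (Fin m) ℂ) (s : ℝ) (j : Fin m) (v : Fin m → ℂ)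
    (C : ℝ) (hC : ∀ k, ‖v k‖ ≤ C) (hC0 : 0 ≤ C) :
    ‖∑ k, M s j k * v k‖ ≤ GG M s * C := by
  calc ‖∑ k, M s j k * v k‖ ≤ ∑ k, ‖M s j k * v k‖ := norm_sum_le _ _
    _ ≤ ∑ k, ‖M s j k‖ * C := by
        refine Finset.sum_le_sum fun k _ => ?_
        rw [norm_mul]
        exact mul_le_mul_of_nonneg_left (hC k) (norm_nonneg _)
    _ = (∑ k, ‖M s j k‖) * C := by rw [Finset.sum_mul]
    _ ≤ GG M s * C := mul_le_mul_of_nonneg_right (row_le_GG M s j) hC0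

/-- integrability of the ODE integrand against a continuous function. -/
lemma integrand_integrable {x y : ℝ} {M : ℝ → Matrix (Fin m) (Fin m) ℂ}
    (hM : ∀ j k, IntegrableOn (fun t => M t j k) (Icc x y))
    {F : Fin m → ℝ → ℂ} (hF : ∀ j, IntegrableOn (F j) (Icc x y))
    {u : ℝ → Fin m → ℂ} (hu : Continuous u) (j : Fin m) :
    IntegrableOn (fun s => ∑ k, M s j k * u s k + F j s) (Icc x y) := by
  have hsum : IntegrableOn (fun s => ∑ k, M s j k * u s k) (Icc x y) := by
    apply integrable_finset_sum
    intro k _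
    have hcont : Continuous fun s => u s k := (continuous_apply k).comp hu
    rcases (isCompact_Icc : IsCompact (Icc x y)).exists_bound_of_continuousOn
      (hcont.continuousOn) with ⟨C, hC⟩
    apply Integrable.mono' ((hM j k).norm.mul_const C)
    · exact ((hM j k).aestronglyMeasurable).mul hcont.aestronglyMeasurable
    · filter_upwards [ae_restrict_mem measurableSet_Icc] with s hs
      rw [norm_mul]
      exact mul_le_mul_of_nonneg_left (hC s hs) (norm_nonneg _)
  exact hsum.add (hF j)

lemma ode_local (t₀ t₁ : ℝ) (h01 : t₀ ≤ t₁) (τ : ℝ) (hτ : τ ∈ Icc t₀ t₁)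
    (M : ℝ → Matrix (Fin m) (Fin m) ℂ)
    (hM : ∀ j k, IntegrableOn (fun t => M t j k) (Icc t₀ t₁))
    (F : Fin m → ℝ → ℂ) (hF : ∀ j, IntegrableOn (F j) (Icc t₀ t₁))
    (hsmall : ∫ s in Ioc t₀ t₁, GG M s ≤ 1/2)
    (c : Fin m → ℂ) :
    ∃ w : ℝ → Fin m → ℂ, Continuous w ∧
      ∀ j, ∀ t ∈ Icc t₀ t₁, w t j = c j + ∫ s in τ..t, (∑ k, M s j k * w s k + F j s) := by
  haveI : Nonempty (Icc t₀ t₁) := ⟨⟨τ, hτ⟩⟩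
  set X := C(Icc t₀ t₁, Fin m → ℂ)
  -- extension operator
  set ext : X → ℝ → Fin m → ℂ := fun u s => u (projIcc t₀ t₁ h01 s) with hext
  have hext_cont : ∀ u : X, Continuous (ext u) := fun u =>
    u.continuous.comp (continuous_projIcc)
  have hext_bd : ∀ (u : X) (s : ℝ) (k : Fin m), ‖ext u s k‖ ≤ ‖u‖ := fun u s k =>
    (norm_le_pi_norm _ k).trans (u.norm_coe_le_norm _)
  -- integrand
  set P : X → Fin m → ℝ → ℂ := fun u j s => ∑ k, M s j k * ext u s k + F j s with hP
  have hPint : ∀ (u : X) (j : Fin m), IntegrableOn (P u j) (Icc t₀ t₁) := fun u j =>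
    integrand_integrable hM hF (hext_cont u) j
  have hPii : ∀ (u : X) (j : Fin m), IntervalIntegrable (P u j) volume t₀ t₁ := fun u j => by
    rw [intervalIntegrable_iff_integrableOn_Icc_of_le h01]; exact hPint u j
  -- the Picard operator
  have Tcont : ∀ u : X, Continuous fun t : Icc t₀ t₁ => fun j => c j + ∫ s in τ..(t:ℝ), P u j s := by
    intro u
    apply continuous_pi
    intro j
    apply continuous_const.add
    have hco : ContinuousOn (fun x => ∫ s in τ..x, P u j s) (Icc t₀ t₁) := by
      have := intervalIntegral.continuousOn_primitive_interval'
        (μ := volume) (f := P u j) (b₁ := t₀) (b₂ := t₁) (a := τ)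
        ((hPii u j)) (by rwa [uIcc_of_le h01])
      rwa [uIcc_of_le h01] at this
    exact hco.restrict
  set T : X → X := fun u => ⟨_, Tcont u⟩ with hT
  -- contraction estimate
  have hdist : ∀ u v : X, dist (T u) (T v) ≤ (1/2 : ℝ) * dist u v := by
    intro u v
    rw [ContinuousMap.dist_le (by positivity)]
    intro t
    rw [dist_pi_le_iff (by positivity)]
    intro j
    have hiiu : IntervalIntegrable (P u j) volume τ (t:ℝ) :=
      ((hPint u j).mono_set (uIcc_subset_Icc hτ t.2)).intervalIntegrable
    have hiiv : IntervalIntegrable (P v j) volume τ (t:ℝ) :=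
      ((hPint v j).mono_set (uIcc_subset_Icc hτ t.2)).intervalIntegrable
    have key : dist ((T u t) j) ((T v t) j) = ‖∫ s in τ..(t:ℝ), (P u j s - P v j s)‖ := by
      rw [dist_eq_norm]
      show ‖(c j + ∫ s in τ..(t:ℝ), P u j s) - (c j + ∫ s in τ..(t:ℝ), P v j s)‖ = _
      rw [add_sub_add_left_eq_sub, ← intervalIntegral.integral_sub hiiu hiiv]
    rw [key]
    have hsub : Set.uIoc τ (t:ℝ) ⊆ Ioc t₀ t₁ := by
      apply Ioc_subset_Ioc
      · exact le_min hτ.1 t.2.1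
      · exact max_le hτ.2 t.2.2
    calc ‖∫ s in τ..(t:ℝ), (P u j s - P v j s)‖
        ≤ ∫ s in Set.uIoc τ (t:ℝ), ‖P u j s - P v j s‖ :=
          intervalIntegral.norm_integral_le_integral_norm_uIoc
      _ ≤ ∫ s in Ioc t₀ t₁, ‖P u j s - P v j s‖ := by
          apply setIntegral_mono_set
          · have hd : IntegrableOn (fun s => ‖P u j s - P v j s‖) (Icc t₀ t₁) :=
              ((hPint u j).sub (hPint v j)).norm
            exact hd.mono_set Ioc_subset_Icc_self
          · filter_upwards with s using norm_nonneg _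
          · exact HasSubset.Subset.eventuallyLE hsub
      _ ≤ ∫ s in Ioc t₀ t₁, GG M s * dist u v := by
          apply setIntegral_mono_on
          · have hd : IntegrableOn (fun s => ‖P u j s - P v j s‖) (Icc t₀ t₁) :=
              ((hPint u j).sub (hPint v j)).norm
            exact hd.mono_set Ioc_subset_Icc_self
          · exact ((GG_integrable hM).mono_set Ioc_subset_Icc_self).mul_const _
          · exact measurableSet_Ioc
          · intro s _
            have : P u j s - P v j s = ∑ k, M s j k * (ext u s k - ext v s k) := by
              simp only [hP, Finset.sum_sub_distrib, mul_sub]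
              ring
            rw [this]
            apply mv_bound
            · intro k
              have h1 : ‖ext u s k - ext v s k‖ = dist (u (projIcc t₀ t₁ h01 s) k)
                  (v (projIcc t₀ t₁ h01 s) k) := by rw [dist_eq_norm]
              rw [h1]
              exact (dist_le_pi_dist _ _ k).trans (ContinuousMap.dist_apply_le_dist _)
            · exact dist_nonneg
      _ = (∫ s in Ioc t₀ t₁, GG M s) * dist u v := by rw [integral_mul_const]
      _ ≤ (1/2 : ℝ) * dist u v := mul_le_mul_of_nonneg_right hsmall dist_nonneg
  have hcw : ContractingWith (1/2 : ℝ≥0) T := by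
    refine ⟨?_, ?_⟩
    · rw [← NNReal.coe_lt_coe]; norm_num
    · apply LipschitzWith.of_dist_le_mul
      intro u v
      have hc : ((1/2 : ℝ≥0) : ℝ) = 1/2 := by norm_num
      rw [hc]
      exact hdist u v
  obtain ⟨u, hu⟩ : ∃ u : X, T u = u := ⟨hcw.fixedPoint T, hcw.fixedPoint_isFixedPt⟩
  refine ⟨ext u, hext_cont u, ?_⟩
  intro j t ht
  show ext u t j = c j + ∫ s in τ..t, P u j s
  have h1 : ext u t = u ⟨t, ht⟩ := by
    show u (projIcc t₀ t₁ h01 t) = u ⟨t, ht⟩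
    rw [projIcc_of_mem h01 ht]
  rw [h1, ← ContinuousMap.congr_fun hu ⟨t, ht⟩]
  rfl


lemma ode_global_fwd (a b : ℝ) (hab : a ≤ b)
    (M : ℝ → Matrix (Fin m) (Fin m) ℂ)
    (hM : ∀ j k, IntegrableOn (fun t => M t j k) (Icc a b))
    (F : Fin m → ℝ → ℂ) (hF : ∀ j, IntegrableOn (F j) (Icc a b))
    (c : Fin m → ℂ) :
    ∃ w : ℝ → Fin m → ℂ, Continuous w ∧
      ∀ j, ∀ t ∈ Icc a b, w t j = c j + ∫ s in a..t, (∑ k, M s j k * w s k + F j s) := by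
  have hGG := GG_integrable hM
  have hGGii : IntervalIntegrable (GG M) volume a b := by
    rw [intervalIntegrable_iff_integrableOn_Icc_of_le hab]; exact hGG
  -- continuity of the primitive of GG
  set KG : ℝ → ℝ := fun x => ∫ s in a..x, GG M s with hKG
  have hKGc : ContinuousOn KG (Icc a b) := by
    have := intervalIntegral.continuousOn_primitive_interval'
      (μ := volume) (f := GG M) (b₁ := a) (b₂ := b) (a := a)
      hGGii (by rw [uIcc_of_le hab]; exact left_mem_Icc.mpr hab)
    rwa [uIcc_of_le hab] at this
  have hKGu : UniformContinuousOn KG (Icc a b) :=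
    isCompact_Icc.uniformContinuousOn_of_continuous hKGc
  rw [Metric.uniformContinuousOn_iff] at hKGu
  obtain ⟨δ, hδ, hδe⟩ := hKGu (1/2) (by norm_num)
  set N : ℕ := ⌈(b - a)/δ⌉₊ + 1 with hN
  have hN0 : (0:ℝ) < (N:ℝ) := by positivity
  set st : ℝ := (b - a)/(N:ℝ) with hstdef
  have hst : 0 ≤ st := div_nonneg (by linarith) (le_of_lt hN0)
  have hstδ : st < δ := by
    rw [hstdef, div_lt_iff₀ hN0]
    have h1 : (b - a)/δ ≤ (⌈(b - a)/δ⌉₊ : ℝ) := Nat.le_ceil _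
    have h2 : ((⌈(b - a)/δ⌉₊ : ℝ)) < (N:ℝ) := by
      rw [hN]; push_cast; linarith
    have : (b - a)/δ < (N:ℝ) := lt_of_le_of_lt h1 h2
    calc b - a = ((b - a)/δ) * δ := by field_simp
      _ < (N:ℝ) * δ := by exact mul_lt_mul_of_pos_right this hδ
      _ = δ * N := by ring
  set tpt : ℕ → ℝ := fun i => a + (i:ℝ) * st with htptdef
  have htpt_mono : ∀ {i i' : ℕ}, i ≤ i' → tpt i ≤ tpt i' := by
    intro i i' h
    apply add_le_add le_rfl
    exact mul_le_mul_of_nonneg_right (Nat.cast_le.mpr h) hst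
  have htptN : tpt N = b := by
    rw [htptdef]
    simp only []
    rw [hstdef]
    field_simp
    ring
  have htpt_mem : ∀ i, i ≤ N → tpt i ∈ Icc a b := by
    intro i hi
    constructor
    · rw [htptdef]; simp only []; nlinarith [mul_nonneg (Nat.cast_nonneg (α := ℝ) i) hst]
    · rw [← htptN]; exact htpt_mono hi
  have hsmall : ∀ i, i < N → ∫ s in Ioc (tpt i) (tpt (i+1)), GG M s ≤ 1/2 := by
    intro i hi
    have hx := htpt_mem i (le_of_lt hi)
    have hy := htpt_mem (i+1) hi
    have hxy : tpt i ≤ tpt (i+1) := htpt_mono (Nat.le_succ i)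
    have hii1 : IntervalIntegrable (GG M) volume a (tpt i) :=
      (hGG.mono_set (uIcc_subset_Icc (left_mem_Icc.mpr hab) hx)).intervalIntegrable
    have hii2 : IntervalIntegrable (GG M) volume (tpt i) (tpt (i+1)) :=
      (hGG.mono_set (uIcc_subset_Icc hx hy)).intervalIntegrable
    have he : ∫ s in Ioc (tpt i) (tpt (i+1)), GG M s = KG (tpt (i+1)) - KG (tpt i) := by
      rw [hKG]
      simp only []
      rw [← intervalIntegral.integral_add_adjacent_intervals hii1 hii2]
      rw [intervalIntegral.integral_of_le hxy]
      ring
    rw [he]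
    have hdist : dist (tpt (i+1)) (tpt i) < δ := by
      rw [Real.dist_eq]
      have : tpt (i+1) - tpt i = st := by rw [htptdef]; push_cast; ring
      rw [this, abs_of_nonneg hst]
      exact hstδ
    have := hδe (tpt (i+1)) hy (tpt i) hx hdist
    rw [Real.dist_eq] at this
    calc KG (tpt (i+1)) - KG (tpt i) ≤ |KG (tpt (i+1)) - KG (tpt i)| := le_abs_self _
      _ ≤ 1/2 := le_of_lt this
  -- the inductive construction
  suffices h : ∀ i : ℕ, i ≤ N → ∃ w : ℝ → Fin m → ℂ, Continuous w ∧
      ∀ j, ∀ t ∈ Icc a (tpt i), w t j = c j + ∫ s in a..t, (∑ k, M s j k * w s k + F j s) by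
    obtain ⟨w, hwc, hw⟩ := h N (le_refl N)
    exact ⟨w, hwc, by rwa [htptN] at hw⟩
  intro i
  induction i with
  | zero =>
    intro _
    refine ⟨fun _ => c, continuous_const, ?_⟩
    intro j t ht
    have h0 : tpt 0 = a := by rw [htptdef]; simp
    rw [h0] at ht
    have : t = a := le_antisymm ht.2 ht.1
    rw [this, intervalIntegral.integral_same, add_zero]
  | succ i ih =>
    intro hi1
    obtain ⟨w, hwc, hw⟩ := ih (le_of_lt hi1)
    have hx := htpt_mem i (le_of_lt hi1)
    have hy := htpt_mem (i+1) hi1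
    have hxy : tpt i ≤ tpt (i+1) := htpt_mono (Nat.le_succ i)
    obtain ⟨v, hvc, hv⟩ := ode_local (tpt i) (tpt (i+1)) hxy (tpt i)
      (left_mem_Icc.mpr hxy) M
      (fun j k => (hM j k).mono_set (Icc_subset_Icc hx.1 hy.2))
      F (fun j => (hF j).mono_set (Icc_subset_Icc hx.1 hy.2))
      (hsmall i hi1) (w (tpt i))
    have hagree : v (tpt i) = w (tpt i) := by
      funext j
      have := hv j (tpt i) (left_mem_Icc.mpr hxy)
      rwa [intervalIntegral.integral_same, add_zero] at this
    set W : ℝ → Fin m → ℂ := fun s => if s ≤ tpt i then w s else v s with hWdef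
    have hWc : Continuous W := by
      apply Continuous.if_le hwc hvc continuous_id continuous_const
      intro x hx'
      simp only [id_eq] at hx'
      rw [hx', hagree]
    have hWw : ∀ s, s ≤ tpt i → W s = w s := fun s hs => if_pos hs
    have hWv : ∀ s, tpt i ≤ s → W s = v s := by
      intro s hs
      rcases eq_or_lt_of_le hs with h | h
      · rw [hWdef]; simp only []
        rw [if_pos (le_of_eq h.symm), ← h, hagree]
      · exact if_neg (not_le.mpr h)
    have hII : ∀ (u : ℝ → Fin m → ℂ), Continuous u → ∀ x ∈ Icc a b, ∀ y ∈ Icc a b, ∀ j,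
        IntervalIntegrable (fun s => ∑ k, M s j k * u s k + F j s) volume x y := by
      intro u hu x hxm y hym j
      exact ((integrand_integrable hM hF hu j).mono_set (uIcc_subset_Icc hxm hym)).intervalIntegrable
    refine ⟨W, hWc, ?_⟩
    intro j t ht
    by_cases hcase : t ≤ tpt i
    · rw [hWw t hcase, hw j t ⟨ht.1, hcase⟩]
      congr 1
      apply intervalIntegral.integral_congr
      intro s hs
      rw [uIcc_of_le ht.1] at hs
      dsimp only
      rw [hWw s (hs.2.trans hcase)]
    · have htmem : t ∈ Icc a b := ⟨ht.1, ht.2.trans hy.2⟩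
      have h2 : tpt i ≤ t := le_of_lt (not_le.mp hcase)
      rw [hWv t h2, hv j t ⟨h2, ht.2⟩, hw j (tpt i) ⟨hx.1, le_refl _⟩]
      have e1 : (∫ s in a..tpt i, (∑ k, M s j k * w s k + F j s))
          = ∫ s in a..tpt i, (∑ k, M s j k * W s k + F j s) := by
        apply intervalIntegral.integral_congr
        intro s hs
        rw [uIcc_of_le hx.1] at hs
        dsimp only
        rw [hWw s hs.2]
      have e2 : (∫ s in tpt i..t, (∑ k, M s j k * v s k + F j s))
          = ∫ s in tpt i..t, (∑ k, M s j k * W s k + F j s) := by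
        apply intervalIntegral.integral_congr
        intro s hs
        rw [uIcc_of_le h2] at hs
        dsimp only
        rw [hWv s hs.1]
      rw [e1, e2, add_assoc,
        intervalIntegral.integral_add_adjacent_intervals
          (hII W hWc a (left_mem_Icc.mpr hab) (tpt i) hx j)
          (hII W hWc (tpt i) hx t htmem j)]


lemma ode_global_bwd (a b : ℝ) (hab : a ≤ b)
    (M : ℝ → Matrix (Fin m) (Fin m) ℂ)
    (hM : ∀ j k, IntegrableOn (fun t => M t j k) (Icc a b))
    (F : Fin m → ℝ → ℂ) (hF : ∀ j, IntegrableOn (F j) (Icc a b))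
    (c : Fin m → ℂ) :
    ∃ w : ℝ → Fin m → ℂ, Continuous w ∧
      ∀ j, ∀ t ∈ Icc a b, w t j = c j + ∫ s in b..t, (∑ k, M s j k * w s k + F j s) := by
  have refl_int : ∀ (g : ℝ → ℂ), IntegrableOn g (Icc a b) →
      IntegrableOn (fun t => g (a+b-t)) (Icc a b) := by
    intro g hg
    have h1 : IntervalIntegrable g volume a b := by
      rw [intervalIntegrable_iff_integrableOn_Icc_of_le hab]; exact hg
    have h2 := (h1.comp_sub_left (a+b)).symm
    have h3 : IntervalIntegrable (fun x => g (a+b-x)) volume a b := by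
      have e1 : a+b-a = b := by ring
      have e2 : a+b-b = a := by ring
      rwa [e1, e2] at h2
    rwa [intervalIntegrable_iff_integrableOn_Icc_of_le hab] at h3
  set M' : ℝ → Matrix (Fin m) (Fin m) ℂ :=
    fun s => Matrix.of (fun j k => -M (a+b-s) j k) with hM'def
  set F' : Fin m → ℝ → ℂ := fun j s => -(F j (a+b-s)) with hF'def
  have hM' : ∀ j k, IntegrableOn (fun t => M' t j k) (Icc a b) := by
    intro j k
    exact (refl_int (fun t => M t j k) (hM j k)).neg
  have hF' : ∀ j, IntegrableOn (F' j) (Icc a b) := by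
    intro j
    exact (refl_int (F j) (hF j)).neg
  obtain ⟨v, hvc, hveq⟩ := ode_global_fwd a b hab M' hM' F' hF' c
  refine ⟨fun t => v (a+b-t), hvc.comp (continuous_const.sub continuous_id), ?_⟩
  intro j t ht
  dsimp only
  have ht' : a+b-t ∈ Icc a b := ⟨by linarith [ht.2], by linarith [ht.1]⟩
  have hv1 := hveq j (a+b-t) ht'
  have hinteq : (fun s => ∑ k, M' s j k * v s k + F' j s)
      = fun s => -((fun r => ∑ k, M r j k * v (a+b-r) k + F j r) ((a+b) - s)) := by
    funext s
    have hss : a+b-(a+b-s) = s := by ring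
    dsimp only [hM'def, hF'def]
    rw [hss, neg_add, ← Finset.sum_neg_distrib, hM'def]
    simp [Matrix.of_apply, neg_mul]
    rfl
  rw [hv1, hinteq, intervalIntegral.integral_neg,
    intervalIntegral.integral_comp_sub_left (fun r => ∑ k, M r j k * v (a+b-r) k + F j r) (a+b)]
  have e1 : a+b-(a+b-t) = t := by ring
  have e2 : a+b-a = b := by ring
  rw [e1, e2, ← intervalIntegral.integral_symm]


lemma ae_zero_of_vanishing_int {a b : ℝ} (hab : a ≤ b) {h : ℝ → ℂ}
    (hi : IntegrableOn h (Icc a b))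
    (hvan : ∀ t ∈ Icc a b, ∫ s in b..t, h s = 0) :
    ∀ᵐ s ∂(volume.restrict (Icc a b)), h s = 0 := by
  have hrestr : volume.restrict (Icc a b) = volume.restrict (Ioc a b) :=
    (Measure.restrict_congr_set Ioc_ae_eq_Icc).symm
  rw [hrestr]
  set μ : Measure ℝ := volume.restrict (Ioc a b) with hμ
  haveI : IsFiniteMeasure μ := by
    constructor
    rw [hμ, Measure.restrict_apply_univ]
    exact measure_Ioc_lt_top
  have hint : Integrable h μ := hi.mono_set Ioc_subset_Icc_self
  have hIoc : ∀ x y, a ≤ x → x ≤ y → y ≤ b → ∫ s in Ioc x y, h s = 0 := by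
    intro x y hax hxy hyb
    have hxm : x ∈ Icc a b := ⟨hax, hxy.trans hyb⟩
    have hym : y ∈ Icc a b := ⟨hax.trans hxy, hyb⟩
    have hii1 : IntervalIntegrable h volume x b :=
      (hi.mono_set (uIcc_subset_Icc hxm (right_mem_Icc.mpr hab))).intervalIntegrable
    have hii2 : IntervalIntegrable h volume b y :=
      (hi.mono_set (uIcc_subset_Icc (right_mem_Icc.mpr hab) hym)).intervalIntegrable
    have hadd := intervalIntegral.integral_add_adjacent_intervals hii1 hii2
    have hxb : ∫ s in x..b, h s = 0 := by
      rw [intervalIntegral.integral_symm, hvan x hxm, neg_zero]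
    rw [← intervalIntegral.integral_of_le hxy, ← hadd, hxb, hvan y hym, add_zero]
  have key : ∀ S : Set ℝ, MeasurableSet S → ∫ s in S, h s ∂μ = 0 := by
    intro S hS
    refine MeasurableSpace.induction_on_inter
      (C := fun S _ => ∫ s in S, h s ∂μ = 0)
      (s := { S : Set ℝ | ∃ l u, l < u ∧ Ioc l u = S })
      ((BorelSpace.measurable_eq (α := ℝ)).trans (borel_eq_generateFrom_Ioc ℝ))
      ?_ ?_ ?_ ?_ ?_ S hS
    · -- pi system
      rintro S ⟨l, u, hlu, rfl⟩ T ⟨l', u', hlu', rfl⟩ hne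
      rw [Ioc_inter_Ioc] at hne ⊢
      exact ⟨l ⊔ l', u ⊓ u', nonempty_Ioc.mp hne, rfl⟩
    · simp
    · rintro S ⟨l, u, hlu, rfl⟩
      rw [hμ, Measure.restrict_restrict measurableSet_Ioc, Ioc_inter_Ioc]
      by_cases hle : l ⊔ a ≤ u ⊓ b
      · exact hIoc (l ⊔ a) (u ⊓ b) le_sup_right hle inf_le_right
      · rw [Ioc_eq_empty (fun hc => hle (le_of_lt hc))]
        simp
    · intro S hSm hCS
      have htot : ∫ s, h s ∂μ = 0 := by
        rw [hμ]
        exact hIoc a b le_rfl hab le_rfl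
      have := integral_add_compl hSm hint
      rw [hCS, htot] at this
      simpa using this
    · intro g hdisj hmeas hC
      rw [integral_iUnion hmeas hdisj hint.integrableOn]
      simp [hC]
  have hres := AEFinStronglyMeasurable.ae_eq_zero_of_forall_setIntegral_eq_zero
    (f := h) (μ := μ)
    (fun S hS _ => hint.integrableOn)
    (fun S hS _ => key S hS)
    (aefinStronglyMeasurable_of_aemeasurable μ hint.aestronglyMeasurable.aemeasurable)
  filter_upwards [hres] with s hs using hs

lemma zero_on_Icc_of_ae {a b : ℝ} (hab : a < b) {h : ℝ → ℂ}
    (hc : ContinuousOn h (Icc a b))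
    (hz : ∀ᵐ s ∂(volume.restrict (Icc a b)), h s = 0) :
    ∀ t ∈ Icc a b, h t = 0 := by
  intro t ht
  by_contra hne
  have hpos : 0 < ‖h t‖ := norm_pos_iff.mpr hne
  have hcw := hc t ht
  rw [Metric.continuousWithinAt_iff] at hcw
  obtain ⟨ε, hε, hball⟩ := hcw (‖h t‖) hpos
  have hlr : max a (t - ε) < min b (t + ε) := by
    have h1 := ht.1; have h2 := ht.2
    rw [max_lt_iff]
    constructor <;> rw [lt_min_iff] <;> constructor <;> linarith
  have hsub : Ioo (max a (t - ε)) (min b (t + ε)) ⊆ {s | ¬ h s = 0} ∩ Icc a b := by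
    intro s hs
    have hsI : s ∈ Icc a b :=
      ⟨le_of_lt (lt_of_le_of_lt (le_max_left _ _) hs.1),
       le_of_lt (lt_of_lt_of_le hs.2 (min_le_left _ _))⟩
    have hd1 : t - ε < s := lt_of_le_of_lt (le_max_right _ _) hs.1
    have hd2 : s < t + ε := lt_of_lt_of_le hs.2 (min_le_right _ _)
    have hsd : dist s t < ε := by
      rw [Real.dist_eq, abs_lt]
      constructor <;> linarith
    have hdd := hball hsI hsd
    refine ⟨?_, hsI⟩
    intro h0
    rw [h0, dist_comm, dist_zero_right] at hdd
    exact lt_irrefl _ hdd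
  rw [ae_iff] at hz
  rw [Measure.restrict_apply' measurableSet_Icc] at hz
  have hmono := measure_mono_null hsub hz
  rw [Real.volume_Ioo] at hmono
  rw [ENNReal.ofReal_eq_zero] at hmono
  linarith

lemma integrableOn_mul_of_bound {S : Set ℝ} (hS : MeasurableSet S) {f g : ℝ → ℂ}
    (hf : IntegrableOn f S) (hg : AEStronglyMeasurable g (volume.restrict S))
    (C : ℝ) (hC : ∀ s ∈ S, ‖g s‖ ≤ C) : IntegrableOn (fun s => f s * g s) S := by
  apply Integrable.mono' (hf.norm.mul_const C)
  · exact hf.aestronglyMeasurable.mul hg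
  · filter_upwards [ae_restrict_mem hS] with s hs
    rw [norm_mul]
    exact mul_le_mul_of_nonneg_left (hC s hs) (norm_nonneg _)

lemma primitive_mul {a b : ℝ} (hab : a ≤ b) {φ ψ : ℝ → ℂ}
    (hφ : IntegrableOn φ (Icc a b)) (hψ : IntegrableOn ψ (Icc a b))
    {t : ℝ} (ht : t ∈ Icc a b) :
    (∫ s in a..t, φ s) * (∫ s in a..t, ψ s)
      = ∫ s in a..t, (φ s * (∫ u in a..s, ψ u) + (∫ u in a..s, φ u) * ψ s) := by
  have hat : a ≤ t := ht.1
  set Iφ : ℝ → ℂ := fun s => ∫ u in Ioc a s, φ u with hIφ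
  set Iψ : ℝ → ℂ := fun s => ∫ u in Ioc a s, ψ u with hIψ
  set μt : Measure ℝ := volume.restrict (Ioc a t) with hμt
  have hsub : Ioc a t ⊆ Icc a b := fun s hs => ⟨le_of_lt hs.1, hs.2.trans ht.2⟩
  have hφt : Integrable φ μt := hφ.mono_set hsub
  have hψt : Integrable ψ μt := hψ.mono_set hsub
  have hIφc : ContinuousOn Iφ (Icc a b) := intervalIntegral.continuousOn_primitive hφ
  have hIψc : ContinuousOn Iψ (Icc a b) := intervalIntegral.continuousOn_primitive hψ
  obtain ⟨Cφ, hCφ⟩ := isCompact_Icc.exists_bound_of_continuousOn hIφc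
  obtain ⟨Cψ, hCψ⟩ := isCompact_Icc.exists_bound_of_continuousOn hIψc
  have hIφm : AEStronglyMeasurable Iφ μt :=
    (hIφc.mono hsub).aestronglyMeasurable measurableSet_Ioc
  have hIψm : AEStronglyMeasurable Iψ μt :=
    (hIψc.mono hsub).aestronglyMeasurable measurableSet_Ioc
  have hφIψ : Integrable (fun s => φ s * Iψ s) μt :=
    integrableOn_mul_of_bound measurableSet_Ioc hφt hIψm Cψ
      (fun s hs => hCψ s (hsub hs))
  have hIφψ : Integrable (fun s => Iφ s * ψ s) μt := by
    have := integrableOn_mul_of_bound measurableSet_Ioc hψt hIφm Cφ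
      (fun s hs => hCφ s (hsub hs))
    exact this.congr (Filter.Eventually.of_forall fun s => mul_comm _ _)
  -- rewrite interval integrals as set integrals
  rw [intervalIntegral.integral_of_le hat, intervalIntegral.integral_of_le hat,
    intervalIntegral.integral_of_le hat]
  have hcongr : ∫ s in Ioc a t, (φ s * (∫ u in a..s, ψ u) + (∫ u in a..s, φ u) * ψ s)
      = ∫ s in Ioc a t, (φ s * Iψ s + Iφ s * ψ s) := by
    apply setIntegral_congr_fun measurableSet_Ioc
    intro s hs
    have has : a ≤ s := le_of_lt hs.1
    dsimp only
    rw [intervalIntegral.integral_of_le has, intervalIntegral.integral_of_le has]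
  rw [hcongr]
  -- the double integral swap
  set H : ℝ × ℝ → ℂ := fun p => ({q : ℝ × ℝ | q.1 < q.2}).indicator (fun q => φ q.1 * ψ q.2) p
    with hH
  have hHset : MeasurableSet {q : ℝ × ℝ | q.1 < q.2} :=
    measurableSet_lt measurable_fst measurable_snd
  have hHval : ∀ s u, H (s, u) = if s < u then φ s * ψ u else 0 := by
    intro s u
    rw [hH]
    dsimp only
    rw [Set.indicator_apply]
    simp only [mem_setOf_eq]
  have hHint : Integrable H (μt.prod μt) := (hφt.mul_prod hψt).indicator hHset
  have hswap := integral_integral_swap (f := fun s u => H (s, u)) hHint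
  have hswapL : ∫ s, (∫ u, H (s, u) ∂μt) ∂μt
      = ∫ s in Ioc a t, (φ s * (∫ u in Ioc s t, ψ u)) := by
    apply setIntegral_congr_fun measurableSet_Ioc
    intro s hs
    dsimp only
    have hfn : (fun u => H (s, u)) = (Ioi s).indicator (fun u => φ s * ψ u) := by
      funext u
      by_cases hc : s < u
      · rw [hHval, if_pos hc, Set.indicator_of_mem (mem_Ioi.mpr hc)]
      · rw [hHval, if_neg hc, Set.indicator_of_notMem (by rwa [mem_Ioi])]
    rw [hfn, integral_indicator measurableSet_Ioi, hμt,
      Measure.restrict_restrict measurableSet_Ioi]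
    have hset : Ioi s ∩ Ioc a t = Ioc s t := by
      ext x
      simp only [mem_inter_iff, mem_Ioi, mem_Ioc]
      constructor
      · rintro ⟨h1, _, h3⟩; exact ⟨h1, h3⟩
      · rintro ⟨h1, h2⟩; exact ⟨h1, lt_trans hs.1 h1, h2⟩
    rw [hset, integral_const_mul]
  have hswapR : ∫ u, (∫ s, H (s, u) ∂μt) ∂μt
      = ∫ u in Ioc a t, (Iφ u * ψ u) := by
    apply setIntegral_congr_fun measurableSet_Ioc
    intro u hu
    dsimp only
    have hfn : (fun s => H (s, u)) = (Iio u).indicator (fun s => φ s * ψ u) := by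
      funext s
      by_cases hc : s < u
      · rw [hHval, if_pos hc, Set.indicator_of_mem (mem_Iio.mpr hc)]
      · rw [hHval, if_neg hc, Set.indicator_of_notMem (by rwa [mem_Iio])]
    rw [hfn, integral_indicator measurableSet_Iio, hμt,
      Measure.restrict_restrict measurableSet_Iio]
    have hset : Iio u ∩ Ioc a t = Ioo a u := by
      ext x
      simp only [mem_inter_iff, mem_Iio, mem_Ioc, mem_Ioo]
      constructor
      · rintro ⟨h1, h2, _⟩; exact ⟨h2, h1⟩
      · rintro ⟨h1, h2⟩; exact ⟨h2, h1, le_trans (le_of_lt h2) hu.2⟩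
    rw [hset, integral_mul_const, ← integral_Ioc_eq_integral_Ioo]
  -- split Iψ
  have hsplitint : ∀ s, s ∈ Ioc a t → Iψ t = Iψ s + ∫ u in Ioc s t, ψ u := by
    intro s hs
    rw [hIψ]
    dsimp only
    have hun : Ioc a s ∪ Ioc s t = Ioc a t := Ioc_union_Ioc_eq_Ioc (le_of_lt hs.1) hs.2
    rw [← hun, setIntegral_union (Ioc_disjoint_Ioc_of_le le_rfl) measurableSet_Ioc
      (hψ.mono_set (fun x hx => hsub ⟨hx.1, hx.2.trans hs.2⟩))
      (hψ.mono_set (fun x hx => hsub ⟨lt_trans hs.1 hx.1, hx.2⟩))]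
  have hR : Integrable (fun s => φ s * (∫ u in Ioc s t, ψ u)) μt := by
    have h1 : Integrable (fun s => φ s * Iψ t - φ s * Iψ s) μt :=
      (hφt.mul_const _).sub hφIψ
    apply h1.congr
    filter_upwards [ae_restrict_mem measurableSet_Ioc] with s hs
    rw [hsplitint s hs]
    ring
  have hstep : ∫ s in Ioc a t, (φ s * Iψ s) = (∫ s in Ioc a t, φ s) * Iψ t
      - ∫ s in Ioc a t, (φ s * (∫ u in Ioc s t, ψ u)) := by
    have h1 : ∫ s in Ioc a t, (φ s * Iψ s)
        = ∫ s in Ioc a t, (φ s * Iψ t - φ s * (∫ u in Ioc s t, ψ u)) := by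
      apply setIntegral_congr_fun measurableSet_Ioc
      intro s hs
      dsimp only
      rw [hsplitint s hs]
      ring
    rw [h1, integral_sub (hφt.mul_const _) hR, integral_mul_const]
  rw [integral_add hφIψ hIφψ, hstep]
  rw [← hswapL, hswap, hswapR]
  ring

lemma affine_mul {a b : ℝ} (hab : a ≤ b) {φ ψ W Z : ℝ → ℂ}
    (hφ : IntegrableOn φ (Icc a b)) (hψ : IntegrableOn ψ (Icc a b))
    (hW : ∀ t ∈ Icc a b, W t = W a + ∫ s in a..t, φ s)
    (hZ : ∀ t ∈ Icc a b, Z t = Z a + ∫ s in a..t, ψ s)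
    {t : ℝ} (ht : t ∈ Icc a b) :
    W t * Z t = W a * Z a + ∫ s in a..t, (φ s * Z s + W s * ψ s) := by
  have hat := ht.1
  have hmem : ∀ s, s ∈ Icc a t → s ∈ Icc a b := fun s hs => ⟨hs.1, hs.2.trans ht.2⟩
  have hsubt : Icc a t ⊆ Icc a b := hmem
  have hii : ∀ {g : ℝ → ℂ}, IntegrableOn g (Icc a b) → IntervalIntegrable g volume a t := by
    intro g hg
    apply IntegrableOn.intervalIntegrable
    rw [uIcc_of_le hat]
    exact hg.mono_set hsubt
  set P : ℝ → ℂ := fun s => ∫ u in a..s, φ u with hP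
  set Q : ℝ → ℂ := fun s => ∫ u in a..s, ψ u with hQ
  have hPc : ContinuousOn P (Icc a t) := by
    have := intervalIntegral.continuousOn_primitive_interval
      (a := a) (b := t) (μ := volume) (f := φ)
      (by rw [uIcc_of_le hat]; exact hφ.mono_set hsubt)
    rwa [uIcc_of_le hat] at this
  have hQc : ContinuousOn Q (Icc a t) := by
    have := intervalIntegral.continuousOn_primitive_interval
      (a := a) (b := t) (μ := volume) (f := ψ)
      (by rw [uIcc_of_le hat]; exact hψ.mono_set hsubt)
    rwa [uIcc_of_le hat] at this
  obtain ⟨CP, hCP⟩ := isCompact_Icc.exists_bound_of_continuousOn hPc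
  obtain ⟨CQ, hCQ⟩ := isCompact_Icc.exists_bound_of_continuousOn hQc
  have hφQ : IntegrableOn (fun s => φ s * Q s) (Icc a t) :=
    integrableOn_mul_of_bound measurableSet_Icc (hφ.mono_set hsubt)
      (hQc.aestronglyMeasurable measurableSet_Icc) CQ hCQ
  have hPψ : IntegrableOn (fun s => P s * ψ s) (Icc a t) := by
    have := integrableOn_mul_of_bound measurableSet_Icc (hψ.mono_set hsubt)
      (hPc.aestronglyMeasurable measurableSet_Icc) CP hCP
    exact this.congr_fun (fun s _ => mul_comm _ _) measurableSet_Icc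
  have hφQii : IntervalIntegrable (fun s => φ s * Q s) volume a t := by
    apply IntegrableOn.intervalIntegrable; rwa [uIcc_of_le hat]
  have hPψii : IntervalIntegrable (fun s => P s * ψ s) volume a t := by
    apply IntegrableOn.intervalIntegrable; rwa [uIcc_of_le hat]
  have hexp : (∫ s in a..t, (φ s * Z s + W s * ψ s))
      = ∫ s in a..t, ((φ s * Z a + W a * ψ s) + (φ s * Q s + P s * ψ s)) := by
    apply intervalIntegral.integral_congr
    intro s hs
    rw [uIcc_of_le hat] at hs
    have h1 := hW s (hmem s hs)
    have h2 := hZ s (hmem s hs)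
    dsimp only
    rw [h1, h2]
    show (φ s * (Z a + Q s) + (W a + P s) * ψ s) = _
    ring
  have hi1 : IntervalIntegrable (fun s => φ s * Z a + W a * ψ s) volume a t :=
    ((hii hφ).mul_const _).add ((hii hψ).const_mul _)
  rw [hexp, intervalIntegral.integral_add hi1 (hφQii.add hPψii),
    intervalIntegral.integral_add hφQii hPψii,
    intervalIntegral.integral_add ((hii hφ).mul_const _) ((hii hψ).const_mul _),
    intervalIntegral.integral_mul_const, intervalIntegral.integral_const_mul]
  have hcore : (∫ s in a..t, φ s) * (∫ s in a..t, ψ s)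
      = (∫ s in a..t, φ s * Q s) + ∫ s in a..t, P s * ψ s := by
    have := primitive_mul hab hφ hψ ht
    rw [this, intervalIntegral.integral_add hφQii hPψii]
  rw [hW t ht, hZ t ht]
  show (W a + P t) * (Z a + Q t) = _
  have hPt : P t = ∫ s in a..t, φ s := rfl
  have hQt : Q t = ∫ s in a..t, ψ s := rfl
  rw [← hPt, ← hQt] at hcore ⊢
  ring_nf
  ring_nf at hcore
  linear_combination hcore

lemma memL2_of_continuous {a b : ℝ} (hab : a ≤ b) {f : ℝ → ℂ}
    (hf : Continuous f) (hbd : ∃ C, ∀ s, ‖f s‖ ≤ C) :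
    MeasureTheory.MemLp f 2 (muab a b) := by
  haveI : IsFiniteMeasure (muab a b) := by
    unfold muab
    constructor
    rw [Measure.restrict_apply_univ]
    exact measure_Icc_lt_top
  obtain ⟨C, hC⟩ := hbd
  exact MemLp.of_bound hf.aestronglyMeasurable C (Filter.Eventually.of_forall hC)

lemma exists_sol {m : ℕ} {a b : ℝ} (hab : a ≤ b) {A : ℝ → Matrix (Fin m) (Fin m) ℂ}
    (hm : 0 < m)
    (hAint : ∀ j k, IntegrableOn (fun t => A t j k) (Icc a b))
    {f : ℝ → ℂ} (hf : Continuous f) (c : Fin m → ℂ) :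
    ∃ w : Fin m → ℝ → ℂ, (∀ j, Continuous (w j)) ∧ (∀ j, w j a = c j) ∧
      HasQD a b A (w ⟨0, hm⟩) w f := by
  set F : Fin m → ℝ → ℂ := fun j s => if (j : ℕ) + 1 = m then f s else 0 with hF
  have hFint : ∀ j, IntegrableOn (F j) (Icc a b) := by
    intro j
    by_cases hc : (j : ℕ) + 1 = m
    · have : F j = f := by funext s; rw [hF]; simp [hc]
      rw [this]
      exact hf.integrableOn_Icc
    · have : F j = fun _ => 0 := by funext s; rw [hF]; simp [hc]
      rw [this]
      exact integrableOn_zero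
  obtain ⟨W, hWc, hWeq⟩ := ode_global_fwd a b hab A hAint F hFint c
  have hwa : ∀ j, W a j = c j := by
    intro j
    have := hWeq j a (left_mem_Icc.mpr hab)
    rwa [intervalIntegral.integral_same, add_zero] at this
  refine ⟨fun j t => W t j, fun j => (continuous_apply j).comp hWc, fun j => hwa j,
    ?_, hf.integrableOn_Icc, ?_⟩
  · intro j hj
    have : j = ⟨0, hm⟩ := Fin.ext hj
    rw [this]
  · intro j
    constructor
    · exact integrand_integrable hAint hFint hWc j
    · intro t ht
      dsimp only
      rw [hwa j]
      exact hWeq j t ht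

lemma hasQD_intervalIntegrable {a b : ℝ} {g : ℝ → ℂ}
    (hg : IntegrableOn g (Icc a b)) {t : ℝ} (hat : a ≤ t) (htb : t ≤ b) :
    IntervalIntegrable g volume a t := by
  apply IntegrableOn.intervalIntegrable
  rw [uIcc_of_le hat]
  exact hg.mono_set (Icc_subset_Icc le_rfl htb)

/-- The subspace of achieved boundary data `(w(a), w(b))`. -/
def Rsub (a b : ℝ) {m : ℕ} (A : ℝ → Matrix (Fin m) (Fin m) ℂ) :
    Submodule ℂ (EuclideanSpace ℂ (Fin m ⊕ Fin m)) where
  carrier := {v | ∃ y w f, HasQD a b A y w f ∧ MeasureTheory.MemLp f 2 (muab a b) ∧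
    (∀ i, w i a = v (Sum.inl i)) ∧ (∀ i, w i b = v (Sum.inr i))}
  zero_mem' := by
    haveI : IsFiniteMeasure (muab a b) := by
      unfold muab; constructor; rw [Measure.restrict_apply_univ]; exact measure_Icc_lt_top
    refine ⟨fun _ => 0, fun _ _ => 0, fun _ => 0, ⟨fun j _ => rfl, integrableOn_zero, ?_⟩,
      ?_, fun i => rfl, fun i => rfl⟩
    · intro j
      constructor
      · have he : (fun s => (∑ k, A s j k * (0:ℂ)) + (if ((j:ℕ)+1 = m) then (0:ℂ) else 0))
            = fun _ => (0:ℂ) := by funext s; simp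
        rw [he]
        exact integrableOn_zero
      · intro t ht
        simp
    · exact memLp_const 0
  add_mem' := by
    rintro v v' ⟨y, w, f, ⟨hy, hfi, hj⟩, hL, hva, hvb⟩ ⟨y', w', f', ⟨hy', hfi', hj'⟩, hL', hva', hvb'⟩
    refine ⟨fun t => y t + y' t, fun j t => w j t + w' j t, fun t => f t + f' t,
      ⟨?_, hfi.add hfi', ?_⟩, hL.add hL', ?_, ?_⟩
    · intro j hj0
      funext t
      rw [← hy j hj0, ← hy' j hj0]
    · intro j
      have hkey : (fun s => (∑ k, A s j k * (w k s + w' k s))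
          + (if ((j:ℕ)+1 = m) then f s + f' s else 0))
          = fun s => ((∑ k, A s j k * w k s) + (if ((j:ℕ)+1 = m) then f s else 0))
            + ((∑ k, A s j k * w' k s) + (if ((j:ℕ)+1 = m) then f' s else 0)) := by
        funext s
        by_cases hc : (j:ℕ)+1 = m <;>
          simp [hc, mul_add, Finset.sum_add_distrib] <;> ring
      constructor
      · rw [hkey]
        exact ((hj j).1).add ((hj' j).1)
      · intro t ht
        dsimp only
        rw [hkey]
        rw [intervalIntegral.integral_add
          (hasQD_intervalIntegrable (hj j).1 ht.1 ht.2)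
          (hasQD_intervalIntegrable (hj' j).1 ht.1 ht.2)]
        rw [(hj j).2 t ht, (hj' j).2 t ht]
        ring
    · intro i
      dsimp only
      rw [hva i, hva' i]
      rfl
    · intro i
      dsimp only
      rw [hvb i, hvb' i]
      rfl
  smul_mem' := by
    rintro lam v ⟨y, w, f, ⟨hy, hfi, hj⟩, hL, hva, hvb⟩
    refine ⟨fun t => lam * y t, fun j t => lam * w j t, fun t => lam * f t,
      ⟨?_, hfi.const_mul lam, ?_⟩, hL.const_mul lam, ?_, ?_⟩
    · intro j hj0
      funext t
      rw [← hy j hj0]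
    · intro j
      have hkey : (fun s => (∑ k, A s j k * (lam * w k s))
          + (if ((j:ℕ)+1 = m) then lam * f s else 0))
          = fun s => lam * ((∑ k, A s j k * w k s) + (if ((j:ℕ)+1 = m) then f s else 0)) := by
        funext s
        have hsum : (∑ k, A s j k * (lam * w k s)) = lam * ∑ k, A s j k * w k s := by
          rw [Finset.mul_sum]
          apply Finset.sum_congr rfl
          intro k _
          ring
        by_cases hc : (j:ℕ)+1 = m <;> simp [hc, hsum, mul_add]
      constructor
      · rw [hkey]
        exact ((hj j).1).const_mul lam
      · intro t ht
        dsimp only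
        rw [hkey, intervalIntegral.integral_const_mul, (hj j).2 t ht]
        ring
    · intro i
      dsimp only
      rw [hva i]
      simp [PiLp.smul_apply, smul_eq_mul]
    · intro i
      dsimp only
      rw [hvb i]
      simp [PiLp.smul_apply, smul_eq_mul]

lemma Rsub_eq_top {m : ℕ} {a b : ℝ} (hab : a < b) (hm : 0 < m)
    {A : ℝ → Matrix (Fin m) (Fin m) ℂ} (hSZ : IsShinZettl a b A) :
    Rsub a b A = ⊤ := by
  have hab' : a ≤ b := le_of_lt hab
  have hAint := hSZ.integrable
  haveI : IsFiniteMeasure (muab a b) := by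
    unfold muab; constructor; rw [Measure.restrict_apply_univ]; exact measure_Icc_lt_top
  rw [← Submodule.orthogonal_eq_bot_iff, Submodule.eq_bot_iff]
  intro u hu
  rw [Submodule.mem_orthogonal] at hu
  set lastI : Fin m := ⟨m - 1, by omega⟩ with hlastI
  set p : Fin m → ℂ := fun i => (starRingEnd ℂ) (u (Sum.inl i)) with hp
  set q : Fin m → ℂ := fun i => (starRingEnd ℂ) (u (Sum.inr i)) with hq
  set M' : ℝ → Matrix (Fin m) (Fin m) ℂ := fun s => Matrix.of (fun j k => -(A s k j)) with hM'
  have hM'int : ∀ j k, IntegrableOn (fun t => M' t j k) (Icc a b) := fun j k => (hAint k j).neg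
  obtain ⟨z, hzc, hzeq⟩ := ode_global_bwd a b hab' M' hM'int (fun _ _ => 0)
    (fun _ => integrableOn_zero) q
  have hzjc : ∀ j, Continuous fun t => z t j := fun j => (continuous_apply j).comp hzc
  have hzb : ∀ j, z b j = q j := by
    intro j
    have := hzeq j b (right_mem_Icc.mpr hab')
    rwa [intervalIntegral.integral_same, add_zero] at this
  have hψint : ∀ j, IntegrableOn (fun s => ∑ k, M' s j k * z s k + (0:ℂ)) (Icc a b) :=
    fun j => integrand_integrable hM'int (fun _ => (integrableOn_zero : IntegrableOn (fun _ => (0:ℂ)) (Icc a b) volume)) hzc j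
  have hψii : ∀ j (x y : ℝ), x ∈ Icc a b → y ∈ Icc a b →
      IntervalIntegrable (fun s => ∑ k, M' s j k * z s k + (0:ℂ)) volume x y := fun j x y hx hy =>
    ((hψint j).mono_set (uIcc_subset_Icc hx hy)).intervalIntegrable
  have hza : ∀ j, ∀ t ∈ Icc a b,
      z t j = z a j + ∫ s in a..t, (∑ k, M' s j k * z s k + (0:ℂ)) := by
    intro j t ht
    have h1 := hzeq j t ht
    have h2 := hzeq j a (left_mem_Icc.mpr hab')
    have hadj := intervalIntegral.integral_add_adjacent_intervals
      (hψii j a b (left_mem_Icc.mpr hab') (right_mem_Icc.mpr hab'))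
      (hψii j b t (right_mem_Icc.mpr hab') ht)
    have hsymm : (∫ s in b..a, (∑ k, M' s j k * z s k + (0:ℂ)))
        = -∫ s in a..b, (∑ k, M' s j k * z s k + (0:ℂ)) := intervalIntegral.integral_symm a b
    rw [h1, h2, hsymm]
    linear_combination hadj
  -- the Lagrange identity
  have hlag : ∀ (y : ℝ → ℂ) (w : Fin m → ℝ → ℂ) (f : ℝ → ℂ), HasQD a b A y w f →
      ∑ j, w j b * z b j = (∑ j, w j a * z a j) + ∫ s in a..b, f s * z s lastI := by
    intro y w f hQD
    obtain ⟨hy0, hfint, hj⟩ := hQD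
    have hwc : ∀ j, ContinuousOn (w j) (Icc a b) := by
      intro j
      have hcprim : ContinuousOn (fun t => w j a + ∫ s in a..t,
          ((∑ k, A s j k * w k s) + (if ((j:ℕ)+1 = m) then f s else 0))) (Icc a b) := by
        apply ContinuousOn.add continuousOn_const
        have := intervalIntegral.continuousOn_primitive_interval
          (a := a) (b := b) (μ := volume)
          (f := fun s => (∑ k, A s j k * w k s) + (if ((j:ℕ)+1 = m) then f s else 0))
          (by rw [uIcc_of_le hab']; exact (hj j).1)
        rwa [uIcc_of_le hab'] at this
      exact hcprim.congr (fun t ht => (hj j).2 t ht)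
    have hjj : ∀ j : Fin m, w j b * z b j = w j a * z a j
        + ∫ s in a..b, (((∑ k, A s j k * w k s) + (if ((j:ℕ)+1 = m) then f s else 0)) * z s j
          + w j s * (∑ k, M' s j k * z s k + (0:ℂ))) := by
      intro j
      exact affine_mul hab' (hj j).1 (hψint j)
        (fun t ht => (hj j).2 t ht) (hza j) (right_mem_Icc.mpr hab')
    -- integrability of each summand
    have hEint : ∀ j : Fin m, IntervalIntegrable
        (fun s => ((∑ k, A s j k * w k s) + (if ((j:ℕ)+1 = m) then f s else 0)) * z s j
          + w j s * (∑ k, M' s j k * z s k + (0:ℂ))) volume a b := by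
      intro j
      apply IntegrableOn.intervalIntegrable
      rw [uIcc_of_le hab']
      obtain ⟨C1, hC1⟩ := isCompact_Icc.exists_bound_of_continuousOn
        ((hzjc j).continuousOn : ContinuousOn (fun t => z t j) (Icc a b))
      obtain ⟨C2, hC2⟩ := isCompact_Icc.exists_bound_of_continuousOn (hwc j)
      have i1 : IntegrableOn (fun s =>
          ((∑ k, A s j k * w k s) + (if ((j:ℕ)+1 = m) then f s else 0)) * z s j) (Icc a b) :=
        integrableOn_mul_of_bound measurableSet_Icc (hj j).1
          ((hzjc j).continuousOn.aestronglyMeasurable measurableSet_Icc) C1 hC1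
      have i2 : IntegrableOn (fun s => w j s * (∑ k, M' s j k * z s k + (0:ℂ))) (Icc a b) := by
        have := integrableOn_mul_of_bound measurableSet_Icc (hψint j)
          ((hwc j).aestronglyMeasurable measurableSet_Icc) C2 hC2
        exact this.congr_fun (fun s _ => mul_comm _ _) measurableSet_Icc
      exact i1.add i2
    have hsum : ∑ j, w j b * z b j = (∑ j, w j a * z a j)
        + ∑ j, ∫ s in a..b, (((∑ k, A s j k * w k s) + (if ((j:ℕ)+1 = m) then f s else 0)) * z s j
          + w j s * (∑ k, M' s j k * z s k + (0:ℂ))) := by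
      rw [Finset.sum_congr rfl (fun j _ => hjj j), Finset.sum_add_distrib]
    rw [hsum, ← intervalIntegral.integral_finset_sum (fun j _ => hEint j)]
    congr 1
    apply intervalIntegral.integral_congr
    intro s _
    dsimp only
    -- pointwise algebra
    have hexp : ∀ j : Fin m,
        (((∑ k, A s j k * w k s) + (if ((j:ℕ)+1 = m) then f s else 0)) * z s j
          + w j s * (∑ k, M' s j k * z s k + (0:ℂ)))
        = ((∑ k, A s j k * w k s * z s j) + (if ((j:ℕ)+1 = m) then f s else 0) * z s j)
          - (∑ k, A s k j * z s k * w j s) := by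
      intro j
      rw [add_zero, add_mul, Finset.sum_mul, Finset.mul_sum]
      have : ∀ k : Fin m, w j s * (M' s j k * z s k) = -(A s k j * z s k * w j s) := by
        intro k
        rw [hM']
        show w j s * ((Matrix.of (fun j k => -(A s k j))) j k * z s k) = _
        rw [Matrix.of_apply]
        ring
      rw [Finset.sum_congr rfl (fun k _ => this k), Finset.sum_neg_distrib]
      ring
    rw [Finset.sum_congr rfl (fun j _ => hexp j), Finset.sum_sub_distrib,
      Finset.sum_add_distrib]
    have hcancel : ∑ j : Fin m, ∑ k : Fin m, A s k j * z s k * w j s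
        = ∑ j : Fin m, ∑ k : Fin m, A s j k * w k s * z s j := by
      rw [Finset.sum_comm]
      apply Finset.sum_congr rfl
      intro j _
      apply Finset.sum_congr rfl
      intro k _
      ring
    rw [hcancel]
    have hlast : ∑ j : Fin m, (if ((j:ℕ)+1 = m) then f s else 0) * z s j
        = f s * z s lastI := by
      rw [Finset.sum_eq_single lastI]
      · rw [if_pos (by rw [hlastI]; simp; omega)]
      · intro j _ hne
        rw [if_neg, zero_mul]
        intro hc
        apply hne
        apply Fin.ext
        rw [hlastI]
        simp
        omega
      · intro hni
        exact absurd (Finset.mem_univ lastI) hni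
    rw [hlast]
    ring
  -- the key identity from orthogonality
  have hkey : ∀ (y : ℝ → ℂ) (w : Fin m → ℝ → ℂ) (f : ℝ → ℂ),
      HasQD a b A y w f → MeasureTheory.MemLp f 2 (muab a b) →
      (∑ j, w j a * (p j + z a j)) + ∫ s in a..b, f s * z s lastI = 0 := by
    intro y w f hQD hL
    set v : EuclideanSpace ℂ (Fin m ⊕ Fin m) :=
      WithLp.toLp 2 (Sum.elim (fun i => w i a) (fun i => w i b)) with hv
    have hvmem : v ∈ Rsub a b A := ⟨y, w, f, hQD, hL, fun i => rfl, fun i => rfl⟩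
    have h0 := hu v hvmem
    rw [PiLp.inner_apply] at h0
    simp only [RCLike.inner_apply] at h0
    rw [Fintype.sum_sum_type] at h0
    have h0' := congrArg (starRingEnd ℂ) h0
    simp only [map_add, map_sum, _root_.map_mul, Complex.conj_conj, map_zero] at h0'
    -- h0' : ∑ i, v (inl i) * conj (u (inl i)) + ∑ i, v (inr i) * conj (u (inr i)) = 0
    have horth : (∑ j, w j a * p j) + (∑ j, w j b * q j) = 0 := by
      rw [← h0']; congr 1 <;> exact Finset.sum_congr rfl fun j _ => mul_comm _ _
    have hlg := hlag y w f hQD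
    have hzbq : ∑ j, w j b * z b j = ∑ j, w j b * q j := by
      apply Finset.sum_congr rfl
      intro j _
      rw [hzb j]
    rw [hzbq] at hlg
    have hcomb : ∑ j, w j a * (p j + z a j) = (∑ j, w j a * p j) + ∑ j, w j a * z a j := by
      rw [← Finset.sum_add_distrib]
      apply Finset.sum_congr rfl
      intro j _
      ring
    rw [hcomb]
    rw [hlg] at horth
    linear_combination horth
  -- Step 1 : p = -z a
  have hstep1 : ∀ i, p i + z a i = 0 := by
    intro i
    obtain ⟨w, hwc, hwa, hQD⟩ := exists_sol hab' hm hAint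
      (continuous_const : Continuous fun _ : ℝ => (0:ℂ)) (Pi.single i 1)
    have hL : MeasureTheory.MemLp (fun _ : ℝ => (0:ℂ)) 2 (muab a b) := memLp_const 0
    have h0 := hkey _ _ _ hQD hL
    have h1 : (∫ s in a..b, (0:ℂ) * z s lastI) = 0 := by simp
    rw [h1, add_zero] at h0
    calc p i + z a i = ∑ j, w j a * (p j + z a j) := by
          rw [Finset.sum_eq_single i]
          · rw [hwa i, Pi.single_eq_same, one_mul]
          · intro j _ hji
            rw [hwa j, Pi.single_eq_of_ne hji, zero_mul]
          · intro hni
            exact absurd (Finset.mem_univ i) hni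
      _ = 0 := h0
  -- Step 2 : the last component of z vanishes on [a,b]
  have hlast0 : ∀ t ∈ Icc a b, z t lastI = 0 := by
    set Zl : ℝ → ℂ := fun t => z t lastI with hZl
    set f : ℝ → ℂ := fun s => (starRingEnd ℂ) (Zl (max a (min b s))) with hf
    have hclamp : Continuous fun s : ℝ => max a (min b s) :=
      continuous_const.max (continuous_const.min continuous_id)
    have hfc : Continuous f := Complex.continuous_conj.comp ((hzjc lastI).comp hclamp)
    obtain ⟨w, hwc, hwa, hQD⟩ := exists_sol hab' hm hAint hfc (fun _ => 0)
    obtain ⟨C, hC⟩ := isCompact_Icc.exists_bound_of_continuousOn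
      ((hzjc lastI).continuousOn : ContinuousOn Zl (Icc a b))
    have hL : MeasureTheory.MemLp f 2 (muab a b) := by
      apply memL2_of_continuous hab' hfc
      refine ⟨C, fun s => ?_⟩
      rw [hf]
      show ‖(starRingEnd ℂ) (Zl (max a (min b s)))‖ ≤ C
      rw [RCLike.norm_conj]
      apply hC
      constructor
      · exact le_max_left _ _
      · exact max_le hab' (min_le_left _ _)
    have h0 := hkey _ _ _ hQD hL
    have h1 : ∑ j, w j a * (p j + z a j) = 0 := by
      apply Finset.sum_eq_zero
      intro j _
      rw [hwa j, zero_mul]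
    rw [h1, zero_add] at h0
    have h2 : (∫ s in a..b, f s * z s lastI)
        = ∫ s in a..b, ((Complex.normSq (Zl s) : ℝ) : ℂ) := by
      apply intervalIntegral.integral_congr
      intro s hs
      rw [uIcc_of_le hab'] at hs
      have hcl : max a (min b s) = s := by
        rw [min_eq_right hs.2, max_eq_right hs.1]
      rw [hf]
      show (starRingEnd ℂ) (Zl (max a (min b s))) * z s lastI = _
      rw [hcl]
      show (starRingEnd ℂ) (Zl s) * Zl s = _
      rw [mul_comm, Complex.mul_conj]
    rw [h2, intervalIntegral.integral_ofReal] at h0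
    rw [Complex.ofReal_eq_zero] at h0
    have hZint : IntegrableOn (fun s => Complex.normSq (Zl s)) (Ioc a b) :=
      (Complex.continuous_normSq.comp (hzjc lastI)).integrableOn_Ioc
    rw [intervalIntegral.integral_of_le hab'] at h0
    have hae := (integral_eq_zero_iff_of_nonneg
      (fun s => Complex.normSq_nonneg (Zl s)) hZint).mp h0
    have haeIcc : ∀ᵐ s ∂(volume.restrict (Icc a b)), Zl s = 0 := by
      rw [(Measure.restrict_congr_set Ioc_ae_eq_Icc).symm]
      filter_upwards [hae] with s hs
      exact Complex.normSq_eq_zero.mp hs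
    exact fun t ht => zero_on_Icc_of_ae hab ((hzjc lastI).continuousOn) haeIcc t ht
  -- Step 3 : downward induction kills all components of z
  have hdown : ∀ i : ℕ, ∀ j : Fin m, m - 1 - i ≤ (j:ℕ) → ∀ t ∈ Icc a b, z t j = 0 := by
    intro i
    induction i with
    | zero =>
      intro j hj t ht
      have hje : j = lastI := Fin.ext (by rw [hlastI]; simp; omega)
      rw [hje]
      exact hlast0 t ht
    | succ i ih =>
      intro j hj t ht
      by_cases hcase : m - 1 - i ≤ (j:ℕ)
      · exact ih j hcase t ht
      · have hjlt : (j:ℕ) < m - 1 - i := not_le.mp hcase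
        have hjv : (j:ℕ) + 1 = m - 1 - i := by omega
        have hKlt : (j:ℕ) + 1 < m := by omega
        set K : Fin m := ⟨(j:ℕ)+1, hKlt⟩ with hK
        have hzK : ∀ t ∈ Icc a b, z t K = 0 := by
          intro t ht
          apply ih K (by rw [hK]; simp; omega) t ht
        have hvan : ∀ t ∈ Icc a b, (∫ s in b..t, (∑ k, M' s K k * z s k + (0:ℂ))) = 0 := by
          intro t ht
          have h1 := hzeq K t ht
          rw [hzK t ht, ← hzb K, hzK b (right_mem_Icc.mpr hab'), zero_add] at h1
          exact h1.symm
        have hae := ae_zero_of_vanishing_int hab' (hψint K) hvan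
        have hae2 : ∀ᵐ s ∂(volume.restrict (Icc a b)), -(A s j K) * z s j = 0 := by
          filter_upwards [hae, ae_restrict_mem measurableSet_Icc] with s hs hsm
          have heq : (∑ k, M' s K k * z s k + (0:ℂ)) = -(A s j K) * z s j := by
            rw [add_zero, Finset.sum_eq_single j]
            · rw [hM']
              show (Matrix.of (fun j' k' => -(A s k' j'))) K j * z s j = _
              rw [Matrix.of_apply]
            · intro k _ hkj
              by_cases hck : m - 1 - i ≤ (k:ℕ)
              · rw [ih k hck s hsm, mul_zero]
              · have hkj' : (k:ℕ) ≠ (j:ℕ) := fun hc => hkj (Fin.ext hc)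
                have hklt : (k:ℕ) + 1 < (K:ℕ) := by
                  rw [hK]
                  simp
                  omega
                rw [hM']
                show (Matrix.of (fun j' k' => -(A s k' j'))) K k * z s k = 0
                rw [Matrix.of_apply, hSZ.eq_zero_of_gt k K hklt s, neg_zero, zero_mul]
            · intro hni
              exact absurd (Finset.mem_univ j) hni
          rw [← heq]
          exact hs
        have hsd : ∀ᵐ s ∂(volume.restrict (Icc a b)), A s j K ≠ 0 :=
          hSZ.superdiag_ne_zero j K (by rw [hK])
        have hzj_ae : ∀ᵐ s ∂(volume.restrict (Icc a b)), z s j = 0 := by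
          filter_upwards [hae2, hsd] with s h1 h2
          rcases mul_eq_zero.mp h1 with h | h
          · exact absurd (neg_eq_zero.mp h) h2
          · exact h
        exact zero_on_Icc_of_ae hab ((hzjc j).continuousOn) hzj_ae t ht
  have hz0 : ∀ j, ∀ t ∈ Icc a b, z t j = 0 := by
    intro j
    apply hdown (m-1) j
    omega
  -- conclude u = 0
  apply WithLp.ofLp_injective
  funext x
  have hzero : ∀ i : Fin m, p i = 0 ∧ q i = 0 := by
    intro i
    constructor
    · have := hstep1 i
      rw [hz0 i a (left_mem_Icc.mpr hab'), add_zero] at this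
      exact this
    · rw [← hzb i]
      exact hz0 i b (right_mem_Icc.mpr hab')
  cases x with
  | inl i =>
    have h1 : (starRingEnd ℂ) (u (Sum.inl i)) = 0 := (hzero i).1
    have := congrArg (starRingEnd ℂ) h1
    simp only [Complex.conj_conj, map_zero] at this
    exact this
  | inr i =>
    have h1 : (starRingEnd ℂ) (u (Sum.inr i)) = 0 := (hzero i).2
    have := congrArg (starRingEnd ℂ) h1
    simp only [Complex.conj_conj, map_zero] at this
    exact this

lemma main_exists {m : ℕ} {a b : ℝ} (hab : a < b) (hm : 0 < m)
    {A : ℝ → Matrix (Fin m) (Fin m) ℂ} (hSZ : IsShinZettl a b A)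
    (va vb : Fin m → ℂ) :
    ∃ y w f, HasQD a b A y w f ∧ MeasureTheory.MemLp f 2 (muab a b) ∧
      (∀ i, w i a = va i) ∧ (∀ i, w i b = vb i) := by
  have htop := Rsub_eq_top hab hm hSZ
  have hvm : (WithLp.toLp 2 (Sum.elim va vb) : EuclideanSpace ℂ (Fin m ⊕ Fin m)) ∈ Rsub a b A := by
    rw [htop]; trivial
  obtain ⟨y, w, f, hQD, hL, hwa, hwb⟩ := hvm
  exact ⟨y, w, f, hQD, hL, fun i => hwa i, fun i => hwb i⟩

end QDProof

/-- **Joint surjectivity of the boundary maps** `(Γ₁, Γ₂) : Dom(L_max) → ℂ^m × ℂ^m`.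
For a formally self-adjoint Shin–Zettl matrix `A = A⁺` on `[a,b]` — of even order `m = 2n`
with `n ≥ 2`, or of odd order `m = 2n+1` with `n ≥ 1` and coefficients `α, β, γ, δ` with
`αδ − βγ ≠ 0` — and for any `f₁, f₂ ∈ ℂ^m` there exists `y ∈ Dom(L_max)` (with
quasi-derivative data `w, f`) such that `Γ₁y = f₁` and `Γ₂y = f₂`. -/
theorem boundary_maps_jointly_surjective (a b : ℝ) (hab : a < b) :
    (∀ (n : ℕ), 2 ≤ n →
      ∀ A : ℝ → Matrix (Fin (2 * n)) (Fin (2 * n)) ℂ, IsShinZettl a b A →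
        (∀ t : ℝ, formalAdjoint A t = A t) →
        ∀ f₁ f₂ : Fin (2 * n) → ℂ,
          ∃ (y : ℝ → ℂ) (w : Fin (2 * n) → ℝ → ℂ) (f : ℝ → ℂ),
            HasQD a b A y w f ∧ MeasureTheory.MemLp f 2 (muab a b) ∧
            Gamma1E a b w = f₁ ∧ Gamma2E a b w = f₂) ∧
    (∀ (n : ℕ), 1 ≤ n →
      ∀ A : ℝ → Matrix (Fin (2 * n + 1)) (Fin (2 * n + 1)) ℂ, IsShinZettl a b A →
        (∀ t : ℝ, formalAdjoint A t = A t) →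
        ∀ αc βc γc δc : ℂ, αc * δc - βc * γc ≠ 0 →
          ∀ f₁ f₂ : Fin (2 * n + 1) → ℂ,
            ∃ (y : ℝ → ℂ) (w : Fin (2 * n + 1) → ℝ → ℂ) (f : ℝ → ℂ),
              HasQD a b A y w f ∧ MeasureTheory.MemLp f 2 (muab a b) ∧
              Gamma1O a b αc βc w = f₁ ∧ Gamma2O a b γc δc w = f₂) := by
  constructor
  · -- even case
    intro n hn A hSZ _hadj f₁ f₂
    have hm : 0 < 2*n := by omega
    set va : Fin (2*n) → ℂ := fun k =>
      if h : (k:ℕ) < n then f₂ k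
      else (Complex.I ^ (2*n) * (-1:ℂ) ^ ((2*n-1-(k:ℕ))+1))⁻¹
        * f₁ ⟨2*n-1-(k:ℕ), by have := k.isLt; omega⟩ with hva
    set vb : Fin (2*n) → ℂ := fun k =>
      if h : (k:ℕ) < n then f₂ ⟨(k:ℕ)+n, by omega⟩
      else (Complex.I ^ (2*n) * (-1:ℂ) ^ ((3*n-1-(k:ℕ))-n))⁻¹
        * f₁ ⟨3*n-1-(k:ℕ), by have := k.isLt; omega⟩ with hvb
    obtain ⟨y, w, f, hQD, hL, hwa, hwb⟩ := QDProof.main_exists hab hm hSZ va vb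
    have hva' : ∀ (kk : ℕ) (hk : kk < 2*n), ¬(kk < n) →
        w ⟨kk, hk⟩ a = (Complex.I ^ (2*n) * (-1:ℂ) ^ ((2*n-1-kk)+1))⁻¹
          * f₁ ⟨2*n-1-kk, by omega⟩ := by
      intro kk hk hkn
      rw [hwa ⟨kk, hk⟩, hva]
      show (if h : kk < n then _ else _) = _
      rw [dif_neg hkn]
    have hvb' : ∀ (kk : ℕ) (hk : kk < 2*n) (hkn : ¬(kk < n)),
        w ⟨kk, hk⟩ b = (Complex.I ^ (2*n) * (-1:ℂ) ^ ((3*n-1-kk)-n))⁻¹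
          * f₁ ⟨3*n-1-kk, by omega⟩ := by
      intro kk hk hkn
      rw [hwb ⟨kk, hk⟩, hvb]
      show (if h : kk < n then _ else _) = _
      rw [dif_neg hkn]
    have hC : ∀ e : ℕ, Complex.I ^ (2*n) * (-1:ℂ) ^ e ≠ 0 :=
      fun e => mul_ne_zero (pow_ne_zero _ Complex.I_ne_zero) (pow_ne_zero _ (by norm_num))
    refine ⟨y, w, f, hQD, hL, ?_, ?_⟩
    · funext j
      rw [Gamma1E]
      by_cases hj : (j:ℕ) < n
      · rw [if_pos hj, hva' (2*n-1-(j:ℕ)) (by have := j.isLt; omega) (by omega)]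
        have e1 : 2*n-1-(2*n-1-(j:ℕ)) = (j:ℕ) := by have := j.isLt; omega
        simp only [e1, Fin.eta]
        rw [← mul_assoc, mul_inv_cancel₀ (hC _), one_mul]
      · rw [if_neg hj, hvb' (2*n-1-((j:ℕ)-n)) (by have := j.isLt; omega) (by have := j.isLt; omega)]
        have e1 : 3*n-1-(2*n-1-((j:ℕ)-n)) = (j:ℕ) := by have := j.isLt; omega
        have e2 : 3*n-1-(2*n-1-((j:ℕ)-n))-n = (j:ℕ)-n := by have := j.isLt; omega
        simp only [e1, e2, Fin.eta]
        rw [← mul_assoc, mul_inv_cancel₀ (hC _), one_mul]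
    · funext j
      rw [Gamma2E]
      by_cases hj : (j:ℕ) < n
      · rw [if_pos hj, hwa j, hva]
        show (if h : (j:ℕ) < n then _ else _) = _
        rw [dif_pos hj]
      · rw [if_neg hj, hwb ⟨(j:ℕ)-n, by have := j.isLt; omega⟩, hvb]
        show (if h : (j:ℕ)-n < n then f₂ ⟨(j:ℕ)-n+n, _⟩ else _) = _
        rw [dif_pos (by have := j.isLt; omega)]
        congr 1
        apply Fin.ext
        show (j:ℕ)-n+n = (j:ℕ)
        omega
  · -- odd case
    intro n hn A hSZ _hadj αc βc γc δc hD f₁ f₂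
    have hm : 0 < 2*n+1 := by omega
    set pp : ℂ := (Complex.I ^ (2*n+1))⁻¹ * f₁ ⟨2*n, by omega⟩ with hpp
    set qq : ℂ := f₂ ⟨2*n, by omega⟩ with hqq
    set DD : ℂ := αc * δc - βc * γc with hDD
    set X : ℂ := (δc * pp - βc * qq) / DD with hX
    set Y : ℂ := (αc * qq - γc * pp) / DD with hY
    set va : Fin (2*n+1) → ℂ := fun k =>
      if h1 : (k:ℕ) < n then f₂ k
      else if h2 : (k:ℕ) = n then Y
      else (Complex.I ^ (2*n+1) * (-1:ℂ) ^ ((2*n-(k:ℕ))+1))⁻¹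
        * f₁ ⟨2*n-(k:ℕ), by omega⟩ with hva
    set vb : Fin (2*n+1) → ℂ := fun k =>
      if h1 : (k:ℕ) < n then f₂ ⟨(k:ℕ)+n, by omega⟩
      else if h2 : (k:ℕ) = n then X
      else (Complex.I ^ (2*n+1) * (-1:ℂ) ^ ((3*n-(k:ℕ))-n))⁻¹
        * f₁ ⟨3*n-(k:ℕ), by have := k.isLt; omega⟩ with hvb
    obtain ⟨y, w, f, hQD, hL, hwa, hwb⟩ := QDProof.main_exists hab hm hSZ va vb
    have hva' : ∀ (kk : ℕ) (hk : kk < 2*n+1), ¬(kk < n) → kk ≠ n →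
        w ⟨kk, hk⟩ a = (Complex.I ^ (2*n+1) * (-1:ℂ) ^ ((2*n-kk)+1))⁻¹
          * f₁ ⟨2*n-kk, by omega⟩ := by
      intro kk hk h1 h2
      rw [hwa ⟨kk, hk⟩, hva]
      show (if h : kk < n then _ else _) = _
      rw [dif_neg h1]
      show (if h : kk = n then _ else _) = _
      rw [dif_neg h2]
    have hvb' : ∀ (kk : ℕ) (hk : kk < 2*n+1) (h1 : ¬(kk < n)) (h2 : kk ≠ n),
        w ⟨kk, hk⟩ b = (Complex.I ^ (2*n+1) * (-1:ℂ) ^ ((3*n-kk)-n))⁻¹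
          * f₁ ⟨3*n-kk, by omega⟩ := by
      intro kk hk h1 h2
      rw [hwb ⟨kk, hk⟩, hvb]
      show (if h : kk < n then _ else _) = _
      rw [dif_neg h1]
      show (if h : kk = n then _ else _) = _
      rw [dif_neg h2]
    have hwna : w ⟨n, by omega⟩ a = Y := by
      rw [hwa ⟨n, by omega⟩, hva]
      show (if h : n < n then _ else _) = _
      rw [dif_neg (lt_irrefl n)]
      show (if h : n = n then _ else _) = _
      rw [dif_pos rfl]
    have hwnb : w ⟨n, by omega⟩ b = X := by
      rw [hwb ⟨n, by omega⟩, hvb]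
      show (if h : n < n then _ else _) = _
      rw [dif_neg (lt_irrefl n)]
      show (if h : n = n then _ else _) = _
      rw [dif_pos rfl]
    have hC : ∀ e : ℕ, Complex.I ^ (2*n+1) * (-1:ℂ) ^ e ≠ 0 :=
      fun e => mul_ne_zero (pow_ne_zero _ Complex.I_ne_zero) (pow_ne_zero _ (by norm_num))
    have hI : (Complex.I : ℂ) ^ (2*n+1) ≠ 0 := pow_ne_zero _ Complex.I_ne_zero
    refine ⟨y, w, f, hQD, hL, ?_, ?_⟩
    · funext j
      rw [Gamma1O]
      by_cases hj : (j:ℕ) < n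
      · rw [if_pos hj, hva' (2*n-(j:ℕ)) (by omega) (by omega) (by omega)]
        have e1 : 2*n-(2*n-(j:ℕ)) = (j:ℕ) := by have := j.isLt; omega
        simp only [e1, Fin.eta]
        rw [← mul_assoc, mul_inv_cancel₀ (hC _), one_mul]
      · by_cases hj2 : (j:ℕ) < 2*n
        · rw [if_neg hj, if_pos hj2,
            hvb' (2*n-((j:ℕ)-n)) (by omega) (by omega) (by omega)]
          have e1 : 3*n-(2*n-((j:ℕ)-n)) = (j:ℕ) := by omega
          have e2 : 3*n-(2*n-((j:ℕ)-n))-n = (j:ℕ)-n := by omega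
          simp only [e1, e2, Fin.eta]
          rw [← mul_assoc, mul_inv_cancel₀ (hC _), one_mul]
        · rw [if_neg hj, if_neg hj2, hwnb, hwna]
          have hXY : αc * X + βc * Y = pp := by
            rw [hX, hY]
            field_simp
            ring
          rw [hXY, hpp, ← mul_assoc, mul_inv_cancel₀ hI, one_mul]
          congr 1
          apply Fin.ext
          show 2*n = (j:ℕ)
          have := j.isLt
          omega
    · funext j
      rw [Gamma2O]
      by_cases hj : (j:ℕ) < n
      · rw [if_pos hj, hwa j, hva]
        show (if h : (j:ℕ) < n then _ else _) = _
        rw [dif_pos hj]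
      · by_cases hj2 : (j:ℕ) < 2*n
        · rw [if_neg hj, if_pos hj2, hwb ⟨(j:ℕ)-n, by omega⟩, hvb]
          show (if h : (j:ℕ)-n < n then f₂ ⟨(j:ℕ)-n+n, _⟩ else _) = _
          rw [dif_pos (by omega)]
          congr 1
          apply Fin.ext
          show (j:ℕ)-n+n = (j:ℕ)
          omega
        · rw [if_neg hj, if_neg hj2, hwnb, hwna]
          have hXY : γc * X + δc * Y = qq := by
            rw [hX, hY]
            field_simp
            ring
          rw [hXY, hqq]
          congr 1
          apply Fin.ext
          show 2*n = (j:ℕ)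
          have := j.isLt
          omega


end
end

section
/- Let m ≥ 3, 1 ≤ k ≤ ⌊m/2⌋, and let Q : [a,b] → ℂ be k-times differentiable and y : [a,b] → ℂ be m-times differentiable. Define functions D⁰y, …, Dᵐy by: Dʳy := y^{(r)} for 0 ≤ r ≤ m−k−1; D^{m−k+s}y := (D^{m−k+s−1}y)' + i^{−m}(−1)^s·binom(k,s)·Q·Dˢy for 0 ≤ s ≤ k−1; and Dᵐy := (D^{m−1}y)' + i^{−m}(−1)^k·Q·Dᵏy if 2k < m, while Dᵐy := (D^{m−1}y)' + Q·D^{m/2}y + (−1)^{m/2+1}·Q²·y if m = 2k. Then i^m Dᵐy(t) = i^m y^{(m)}(t) + Q^{(k)}(t)·y(t) for all t ∈ [a,b]. -/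
open Set

noncomputable section

/-- The quasi-derivatives `D^[j]y` (for `j = 0, …, m`) regularizing the two-term expression
`l(y) = i^m y^{(m)} + q y` with `q = Q^{(k)}`:
* `D^[r]y = y^{(r)}` for `0 ≤ r ≤ m − k − 1`;
* `D^[m−k+s]y = (D^[m−k+s−1]y)′ + i^{−m}(−1)^s C(k,s) Q · D^[s]y` for `0 ≤ s ≤ k − 1`;
* `D^[m]y = (D^[m−1]y)′ + i^{−m}(−1)^k C(k,k) Q · D^[k]y` if `2k < m`, and
  `D^[m]y = (D^[m−1]y)′ + Q · D^[m/2]y + (−1)^{m/2+1} Q² · y` if `m = 2k`. -/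
def quasiDeriv (m k : ℕ) (Q y : ℝ → ℂ) : ℕ → ℝ → ℂ := fun j =>
  if h : m - k ≤ j ∧ 1 ≤ j ∧ 1 ≤ m - k then
    if j < m ∨ 2 * k < m then
      deriv (quasiDeriv m k Q y (j - 1)) + fun t =>
        Complex.I ^ (-(m : ℤ)) * (-1 : ℂ) ^ (j - (m - k)) * (k.choose (j - (m - k))) *
          Q t * quasiDeriv m k Q y (j - (m - k)) t
    else
      deriv (quasiDeriv m k Q y (j - 1)) + (fun t => Q t * quasiDeriv m k Q y k t) + fun t =>
        (-1 : ℂ) ^ (m / 2 + 1) * Q t ^ 2 * y t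
  else iteratedDeriv j y
  termination_by j => j
  decreasing_by all_goals omega

lemma qd_base (m k : ℕ) (Q y : ℝ → ℂ) (j : ℕ) (h : ¬(m - k ≤ j ∧ 1 ≤ j ∧ 1 ≤ m - k)) :
    quasiDeriv m k Q y j = iteratedDeriv j y := by
  rw [quasiDeriv]; exact dif_neg h

lemma sum_step (k s : ℕ) (hs1 : s + 1 ≤ k - 1) (hk1 : 1 ≤ k) (Q y : ℝ → ℂ) (t : ℝ) :
    (∑ j ∈ Finset.range (s+1), (-1:ℂ)^(s-j) * (((k-1-j).choose (s-j)):ℂ) *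
        (iteratedDeriv (j+1) Q t * iteratedDeriv (s-j) y t
          + iteratedDeriv j Q t * iteratedDeriv (s+1-j) y t))
      + (-1:ℂ)^(s+1) * ((k.choose (s+1)):ℂ) * iteratedDeriv 0 Q t * iteratedDeriv (s+1) y t
    = ∑ j ∈ Finset.range (s+1+1), (-1:ℂ)^(s+1-j) * (((k-1-j).choose (s+1-j)):ℂ) *
        iteratedDeriv j Q t * iteratedDeriv (s+1-j) y t := by
  rw [Finset.sum_congr rfl (fun j _ => mul_add ((-1:ℂ)^(s-j) * (((k-1-j).choose (s-j)):ℂ))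
        (iteratedDeriv (j+1) Q t * iteratedDeriv (s-j) y t)
        (iteratedDeriv j Q t * iteratedDeriv (s+1-j) y t)),
      Finset.sum_add_distrib]
  rw [Finset.sum_range_succ, Finset.sum_range_succ', Finset.sum_range_succ,
      Finset.sum_range_succ']
  have hpas : ∀ j ∈ Finset.range s,
      (-1:ℂ)^(s-j) * (((k-1-j).choose (s-j)):ℂ) * (iteratedDeriv (j+1) Q t * iteratedDeriv (s-j) y t)
      + (-1:ℂ)^(s-(j+1)) * (((k-1-(j+1)).choose (s-(j+1))):ℂ) * (iteratedDeriv (j+1) Q t * iteratedDeriv (s+1-(j+1)) y t)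
      = (-1:ℂ)^(s+1-(j+1)) * (((k-1-(j+1)).choose (s+1-(j+1))):ℂ) * iteratedDeriv (j+1) Q t * iteratedDeriv (s+1-(j+1)) y t := by
    intro j hj
    simp only [Finset.mem_range] at hj
    have e1 : s - j = (s - (j+1)) + 1 := by omega
    have e2 : k - 1 - j = (k - 1 - (j+1)) + 1 := by omega
    have e3 : s + 1 - (j+1) = (s - (j+1)) + 1 := by omega
    rw [e1, e2, e3, Nat.choose_succ_succ]
    push_cast
    ring
  have hsum2 : (∑ j ∈ Finset.range s, (-1:ℂ)^(s-j) * (((k-1-j).choose (s-j)):ℂ) * (iteratedDeriv (j+1) Q t * iteratedDeriv (s-j) y t))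
      + (∑ j ∈ Finset.range s, (-1:ℂ)^(s-(j+1)) * (((k-1-(j+1)).choose (s-(j+1))):ℂ) * (iteratedDeriv (j+1) Q t * iteratedDeriv (s+1-(j+1)) y t))
      = ∑ j ∈ Finset.range s, (-1:ℂ)^(s+1-(j+1)) * (((k-1-(j+1)).choose (s+1-(j+1))):ℂ) * iteratedDeriv (j+1) Q t * iteratedDeriv (s+1-(j+1)) y t := by
    rw [← Finset.sum_add_distrib]
    exact Finset.sum_congr rfl hpas
  have hkc : k.choose (s+1) = (k-1).choose s + (k-1).choose (s+1) := by
    conv_lhs => rw [show k = k - 1 + 1 from by omega]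
    rw [Nat.choose_succ_succ]
  have hboundary : ((-1:ℂ)^(s-s) * (((k-1-s).choose (s-s)):ℂ) * (iteratedDeriv (s+1) Q t * iteratedDeriv (s-s) y t))
      + ((-1:ℂ)^(s-0) * (((k-1-0).choose (s-0)):ℂ) * (iteratedDeriv 0 Q t * iteratedDeriv (s+1-0) y t))
      + (-1:ℂ)^(s+1) * ((k.choose (s+1)):ℂ) * iteratedDeriv 0 Q t * iteratedDeriv (s+1) y t
      = (-1:ℂ)^(s+1-0) * (((k-1-0).choose (s+1-0)):ℂ) * iteratedDeriv 0 Q t * iteratedDeriv (s+1-0) y t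
        + (-1:ℂ)^(s+1-(s+1)) * (((k-1-(s+1)).choose (s+1-(s+1))):ℂ) * iteratedDeriv (s+1) Q t * iteratedDeriv (s+1-(s+1)) y t := by
    simp only [Nat.sub_self, Nat.sub_zero, Nat.choose_zero_right, pow_zero, Nat.cast_one]
    push_cast [hkc]
    ring
  linear_combination hsum2 + hboundary

lemma telescope (k : ℕ) (hk : 1 ≤ k) (Q y : ℝ → ℂ) (t : ℝ) :
    ∑ j ∈ Finset.range (k-1+1), (-1:ℂ)^(k-1-j) * (((k-1-j).choose (k-1-j)):ℂ) *
        (iteratedDeriv (j+1) Q t * iteratedDeriv (k-1-j) y t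
          + iteratedDeriv j Q t * iteratedDeriv (k-1+1-j) y t)
    = iteratedDeriv k Q t * iteratedDeriv 0 y t
        - (-1:ℂ)^k * (iteratedDeriv 0 Q t * iteratedDeriv k y t) := by
  have ek : k - 1 + 1 = k := by omega
  rw [ek]
  have h : ∀ j ∈ Finset.range k, (-1:ℂ)^(k-1-j) * (((k-1-j).choose (k-1-j)):ℂ) *
        (iteratedDeriv (j+1) Q t * iteratedDeriv (k-1-j) y t
          + iteratedDeriv j Q t * iteratedDeriv (k-j) y t)
      = (fun i => (-1:ℂ)^(k-i) * (iteratedDeriv i Q t * iteratedDeriv (k-i) y t)) (j+1)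
        - (fun i => (-1:ℂ)^(k-i) * (iteratedDeriv i Q t * iteratedDeriv (k-i) y t)) j := by
    intro j hj
    simp only [Finset.mem_range] at hj
    simp only
    have e1 : k - 1 - j = k - (j+1) := by omega
    have e3 : k - j = (k - (j+1)) + 1 := by omega
    rw [e1, Nat.choose_self, e3]
    push_cast
    ring
  rw [Finset.sum_congr rfl h, Finset.sum_range_sub (fun i => (-1:ℂ)^(k-i) * (iteratedDeriv i Q t * iteratedDeriv (k-i) y t))]
  simp only [Nat.sub_self, Nat.sub_zero, pow_zero, one_mul]

lemma hasDerivAt_closed_form (m k s : ℕ) (hs : s < k) (hkm : 2*k ≤ m)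
    (Q y : ℝ → ℂ)
    (hQ : ∀ j < k, Differentiable ℝ (iteratedDeriv j Q))
    (hy : ∀ j < m, Differentiable ℝ (iteratedDeriv j y)) (t : ℝ) :
    HasDerivAt (fun u => iteratedDeriv (m-k+s) y u + Complex.I ^ (-(m:ℤ)) *
        ∑ j ∈ Finset.range (s+1), (-1:ℂ)^(s-j) * (((k-1-j).choose (s-j)):ℂ) *
          iteratedDeriv j Q u * iteratedDeriv (s-j) y u)
      (iteratedDeriv (m-k+s+1) y t + Complex.I ^ (-(m:ℤ)) *
        ∑ j ∈ Finset.range (s+1), (-1:ℂ)^(s-j) * (((k-1-j).choose (s-j)):ℂ) *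
          (iteratedDeriv (j+1) Q t * iteratedDeriv (s-j) y t
            + iteratedDeriv j Q t * iteratedDeriv (s+1-j) y t)) t := by
  have Hy : ∀ r, r < m → HasDerivAt (iteratedDeriv r y) (iteratedDeriv (r+1) y t) t := by
    intro r hr
    simpa [iteratedDeriv_succ] using ((hy r hr) t).hasDerivAt
  have HQ : ∀ j, j < k → HasDerivAt (iteratedDeriv j Q) (iteratedDeriv (j+1) Q t) t := by
    intro j hj
    simpa [iteratedDeriv_succ] using ((hQ j hj) t).hasDerivAt
  refine (Hy (m-k+s) (by omega)).add (HasDerivAt.const_mul _ (HasDerivAt.fun_sum fun j hj => ?_))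
  simp only [Finset.mem_range] at hj
  have h1 := (HQ j (by omega)).mul (Hy (s-j) (by omega))
  have h2 := HasDerivAt.const_mul ((-1:ℂ)^(s-j) * (((k-1-j).choose (s-j)):ℂ)) h1
  have e : s - j + 1 = s + 1 - j := by omega
  rw [e] at h2
  have hfun : (fun u => (-1:ℂ)^(s-j) * (((k-1-j).choose (s-j)):ℂ) * iteratedDeriv j Q u * iteratedDeriv (s-j) y u)
      = fun u => (-1:ℂ)^(s-j) * (((k-1-j).choose (s-j)):ℂ) * (iteratedDeriv j Q u * iteratedDeriv (s-j) y u) := by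
    funext u; ring
  rw [hfun]
  exact h2

lemma qd_closed (m k : ℕ) (hm : 3 ≤ m) (hk1 : 1 ≤ k) (hk2 : 2 * k ≤ m)
    (Q y : ℝ → ℂ)
    (hQ : ∀ j < k, Differentiable ℝ (iteratedDeriv j Q))
    (hy : ∀ j < m, Differentiable ℝ (iteratedDeriv j y)) :
    ∀ s, s ≤ k - 1 → quasiDeriv m k Q y (m - k + s) = fun t =>
      iteratedDeriv (m - k + s) y t + Complex.I ^ (-(m:ℤ)) *
        ∑ j ∈ Finset.range (s+1), (-1:ℂ)^(s-j) * (((k-1-j).choose (s-j)):ℂ) *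
          iteratedDeriv j Q t * iteratedDeriv (s-j) y t := by
  intro s
  induction s with
  | zero =>
    intro _
    rw [quasiDeriv]
    rw [dif_pos (by omega : m - k ≤ m - k + 0 ∧ 1 ≤ m - k + 0 ∧ 1 ≤ m - k)]
    rw [if_pos (by omega : m - k + 0 < m ∨ 2 * k < m)]
    rw [show m - k + 0 - (m - k) = 0 from by omega]
    rw [qd_base m k Q y (m - k + 0 - 1) (by omega), qd_base m k Q y 0 (by omega)]
    funext t
    simp only [Pi.add_apply]
    rw [← iteratedDeriv_succ, show m - k + 0 - 1 + 1 = m - k + 0 from by omega]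
    norm_num [Finset.sum_range_one, iteratedDeriv_zero]
    ring
  | succ s ih =>
    intro hs1
    have hs : s ≤ k - 1 := by omega
    rw [quasiDeriv]
    rw [dif_pos (by omega : m - k ≤ m - k + (s+1) ∧ 1 ≤ m - k + (s+1) ∧ 1 ≤ m - k)]
    rw [if_pos (by omega : m - k + (s+1) < m ∨ 2 * k < m)]
    rw [show m - k + (s+1) - 1 = m - k + s from by omega,
        show m - k + (s+1) - (m - k) = s + 1 from by omega,
        qd_base m k Q y (s+1) (by omega), ih hs]
    funext t
    simp only [Pi.add_apply]
    rw [(hasDerivAt_closed_form m k s (by omega) hk2 Q y hQ hy t).deriv]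
    rw [show Q t = iteratedDeriv 0 Q t from (congrFun (iteratedDeriv_zero (f := Q)) t).symm]
    have key := sum_step k s hs1 hk1 Q y t
    rw [show m - k + (s+1) = m - k + s + 1 from rfl]
    linear_combination Complex.I ^ (-(m:ℤ)) * key

lemma qd_deriv_top (m k : ℕ) (hm : 3 ≤ m) (hk1 : 1 ≤ k) (hk2 : 2*k ≤ m)
    (Q y : ℝ → ℂ)
    (hQ : ∀ j < k, Differentiable ℝ (iteratedDeriv j Q))
    (hy : ∀ j < m, Differentiable ℝ (iteratedDeriv j y)) (t : ℝ) :
    HasDerivAt (quasiDeriv m k Q y (m-1))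
      (iteratedDeriv m y t + Complex.I ^ (-(m:ℤ)) *
        (iteratedDeriv k Q t * iteratedDeriv 0 y t
          - (-1:ℂ)^k * (iteratedDeriv 0 Q t * iteratedDeriv k y t))) t := by
  have closed := qd_closed m k hm hk1 hk2 Q y hQ hy (k-1) le_rfl
  have H := hasDerivAt_closed_form m k (k-1) (by omega) hk2 Q y hQ hy t
  have e : m - k + (k-1) = m - 1 := by omega
  rw [e] at closed H
  rw [closed]
  have e2 : m - 1 + 1 = m := by omega
  rw [e2, telescope k hk1 Q y t] at H
  exact H

/-- **The higher-order quasi-derivative regularization reproduces the classical two-term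
expression for smooth data.**  Let `m ≥ 3`, `1 ≤ k ≤ ⌊m/2⌋`, let `Q` be `k`-times
differentiable and `y` be `m`-times differentiable on `ℝ`.  Then for every `t ∈ [a,b]`,
`i^m D^[m]y(t) = i^m y^{(m)}(t) + Q^{(k)}(t) y(t)`. -/
theorem two_term_quasi_derivative_regularization
    (a b : ℝ) (hab : a < b) (m k : ℕ) (hm : 3 ≤ m) (hk1 : 1 ≤ k) (hk2 : k ≤ m / 2)
    (Q y : ℝ → ℂ)
    (hQ : ∀ j < k, Differentiable ℝ (iteratedDeriv j Q))
    (hy : ∀ j < m, Differentiable ℝ (iteratedDeriv j y)) :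
    ∀ t ∈ Set.Icc a b,
      Complex.I ^ m * quasiDeriv m k Q y m t =
        Complex.I ^ m * iteratedDeriv m y t + iteratedDeriv k Q t * y t := by
  intro t ht
  have hk2' : 2 * k ≤ m := by omega
  have c_def : Complex.I ^ m * Complex.I ^ (-(m:ℤ)) = 1 := by
    rw [← zpow_natCast Complex.I m, ← zpow_add₀ Complex.I_ne_zero]
    simp
  have Htop := qd_deriv_top m k hm hk1 hk2' Q y hQ hy t
  rcases lt_or_eq_of_le hk2' with hlt | heq
  · -- 2k < m
    rw [quasiDeriv]
    rw [dif_pos (by omega : m - k ≤ m ∧ 1 ≤ m ∧ 1 ≤ m - k)]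
    rw [if_pos (Or.inr hlt)]
    rw [show m - (m - k) = k from by omega, qd_base m k Q y k (by omega)]
    simp only [Pi.add_apply]
    rw [Htop.deriv]
    simp only [iteratedDeriv_zero]
    rw [Nat.choose_self]
    push_cast
    linear_combination (iteratedDeriv k Q t * y t) * c_def
  · -- m = 2k
    rw [quasiDeriv]
    rw [dif_pos (by omega : m - k ≤ m ∧ 1 ≤ m ∧ 1 ≤ m - k)]
    rw [if_neg (by omega : ¬(m < m ∨ 2 * k < m))]
    have hk' : quasiDeriv m k Q y k = fun u => iteratedDeriv k y u
        + Complex.I ^ (-(m:ℤ)) * (Q u * y u) := by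
      have closedk := qd_closed m k hm hk1 hk2' Q y hQ hy 0 (by omega)
      rw [show m - k + 0 = k from by omega] at closedk
      rw [closedk]
      funext u
      norm_num [Finset.sum_range_one, iteratedDeriv_zero]
    simp only [Pi.add_apply]
    rw [Htop.deriv]
    simp only [hk', iteratedDeriv_zero]
    rw [show m / 2 + 1 = k + 1 from by omega]
    have hI : Complex.I ^ m = (-1:ℂ)^k := by
      rw [← heq, pow_mul, Complex.I_sq]
    have hc2 : Complex.I ^ (-(m:ℤ)) = (-1:ℂ)^k := by
      rw [zpow_neg, zpow_natCast, hI, ← inv_pow]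
      norm_num
    rw [hI, hc2]
    have hz : ((-1:ℂ)^k)^2 = 1 := by
      rw [← pow_mul, mul_comm, pow_mul]
      norm_num
    linear_combination (iteratedDeriv k Q t * y t - (-1:ℂ)^k * (Q t * iteratedDeriv k y t)) * hz

end
end
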